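/- arXiv:1701.06192 — 6 statements merged into one kernel-verified Lean document; each statement's English description precedes it below -/
import Mathlib

section
/- For a subset A of F_p, the sum over all pairs (a,b) in F_p^2 of (ι_{A,A}(ℓ_{a,b}) − |A|^2/p)^2 is at most p·|A|^2. -/
open Finset

private def lc {p : ℕ} (A : Finset (ZMod p)) (a b : ZMod p) : ℕ :=
  ((A ×ˢ A).filter (fun xy => xy.2 = a * xy.1 + b)).card

private lemma lc_row_sum {p : ℕ} [Fact p.Prime] (A : Finset (ZMod p)) (a : ZMod p) :
    ∑ b : ZMod p, lc A a b = A.card ^ 2 := by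
  have h := Finset.card_eq_sum_card_fiberwise
    (f := fun xy : ZMod p × ZMod p => xy.2 - a * xy.1) (s := A ×ˢ A) (t := univ)
    (fun x _ => mem_univ _)
  rw [Finset.card_product, ← sq] at h
  rw [h]
  refine Finset.sum_congr rfl fun b _ => ?_
  unfold lc
  congr 1
  apply Finset.filter_congr
  intro xy _
  simp [sub_eq_iff_eq_add']

private lemma key_count {p : ℕ} [Fact p.Prime] (P Q : ZMod p × ZMod p) :
    (((univ : Finset (ZMod p)) ×ˢ (univ : Finset (ZMod p))).filter
      (fun ab => P.2 = ab.1 * P.1 + ab.2 ∧ Q.2 = ab.1 * Q.1 + ab.2)).card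
      ≤ if P = Q then p else 1 := by
  by_cases h : P = Q
  · subst h
    rw [if_pos rfl]
    calc _ ≤ (univ : Finset (ZMod p)).card := by
          apply Finset.card_le_card_of_injOn Prod.fst (fun x _ => mem_univ _)
          intro ab hab ab' hab' hfst
          simp only [mem_coe, mem_filter] at hab hab'
          obtain ⟨-, h1, -⟩ := hab
          obtain ⟨-, h1', -⟩ := hab'
          have : ab.2 = ab'.2 := by
            have := h1.symm.trans h1'
            rw [hfst] at this
            exact (add_right_injective _ this)
          exact Prod.ext hfst this
      _ = p := by simp [ZMod.card]
  · rw [if_neg h]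
    apply Finset.card_le_one.mpr
    intro ab hab ab' hab'
    simp only [mem_filter] at hab hab'
    obtain ⟨-, h1, h2⟩ := hab
    obtain ⟨-, h1', h2'⟩ := hab'
    have e1 : ab.1 * (P.1 - Q.1) = P.2 - Q.2 := by rw [mul_sub]; rw [h1, h2]; ring
    have e1' : ab'.1 * (P.1 - Q.1) = P.2 - Q.2 := by rw [mul_sub]; rw [h1', h2']; ring
    have hx : P.1 ≠ Q.1 := by
      intro hx
      apply h
      have : P.2 - Q.2 = 0 := by rw [← e1, hx]; ring
      exact Prod.ext hx (by linear_combination this)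
    have ha : ab.1 = ab'.1 := by
      have := e1.trans e1'.symm
      exact mul_right_cancel₀ (sub_ne_zero.mpr hx) this
    have hb : ab.2 = ab'.2 := by
      have := h1.symm.trans h1'
      rw [ha] at this
      exact add_right_injective _ this
    exact Prod.ext ha hb

private lemma lc_sq_sum {p : ℕ} [Fact p.Prime] (A : Finset (ZMod p)) :
    ∑ a : ZMod p, ∑ b : ZMod p, (lc A a b) ^ 2
      ≤ p * A.card ^ 2 + A.card ^ 2 * A.card ^ 2 := by
  have expand : ∀ a b : ZMod p, (lc A a b) ^ 2 =
      ∑ PQ ∈ (A ×ˢ A) ×ˢ (A ×ˢ A),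
        (if PQ.1.2 = a * PQ.1.1 + b ∧ PQ.2.2 = a * PQ.2.1 + b then 1 else 0) := by
    intro a b
    rw [Finset.sum_product]
    unfold lc
    rw [Finset.card_filter, sq, Finset.sum_mul_sum]
    refine Finset.sum_congr rfl fun P _ => Finset.sum_congr rfl fun Q _ => ?_
    split_ifs <;> simp_all
  calc ∑ a : ZMod p, ∑ b : ZMod p, (lc A a b) ^ 2
      = ∑ ab ∈ (univ : Finset (ZMod p)) ×ˢ (univ : Finset (ZMod p)),
          ∑ PQ ∈ (A ×ˢ A) ×ˢ (A ×ˢ A),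
          (if PQ.1.2 = ab.1 * PQ.1.1 + ab.2 ∧ PQ.2.2 = ab.1 * PQ.2.1 + ab.2 then 1 else 0) := by
        rw [Finset.sum_product]
        exact Finset.sum_congr rfl fun a _ => Finset.sum_congr rfl fun b _ => expand a b
    _ = ∑ PQ ∈ (A ×ˢ A) ×ˢ (A ×ˢ A),
          ∑ ab ∈ (univ : Finset (ZMod p)) ×ˢ (univ : Finset (ZMod p)),
          (if PQ.1.2 = ab.1 * PQ.1.1 + ab.2 ∧ PQ.2.2 = ab.1 * PQ.2.1 + ab.2 then 1 else 0) :=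
        Finset.sum_comm
    _ ≤ ∑ PQ ∈ (A ×ˢ A) ×ˢ (A ×ˢ A), (if PQ.1 = PQ.2 then p else 1) := by
        refine Finset.sum_le_sum fun PQ _ => ?_
        rw [← Finset.card_filter]
        exact key_count PQ.1 PQ.2
    _ ≤ ∑ PQ ∈ (A ×ˢ A) ×ˢ (A ×ˢ A), ((if PQ.1 = PQ.2 then p else 0) + 1) := by
        refine Finset.sum_le_sum fun PQ _ => ?_
        split_ifs <;> omega
    _ = (∑ PQ ∈ (A ×ˢ A) ×ˢ (A ×ˢ A), (if PQ.1 = PQ.2 then p else 0))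
          + A.card ^ 2 * A.card ^ 2 := by
        rw [Finset.sum_add_distrib, Finset.sum_const, Finset.card_product,
          Finset.card_product, smul_eq_mul, mul_one]
        congr 1
        ring
    _ ≤ p * A.card ^ 2 + A.card ^ 2 * A.card ^ 2 := by
        gcongr
        rw [Finset.sum_product]
        calc ∑ P ∈ A ×ˢ A, ∑ Q ∈ A ×ˢ A, (if P = Q then p else 0)
            ≤ ∑ P ∈ A ×ˢ A, p := by
              refine Finset.sum_le_sum fun P hP => ?_
              rw [Finset.sum_ite_eq (A ×ˢ A) P (fun _ => p), if_pos hP]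
          _ = p * A.card ^ 2 := by
              rw [Finset.sum_const, Finset.card_product, ← sq, smul_eq_mul, mul_comm]

/-- For a subset `A` of `F_p`, `Σ_{(a,b)∈F_p²} (ι_{A,A}(ℓ_{a,b}) − |A|²/p)² ≤ p·|A|²`. -/
theorem sum_line_counts_deviation (p : ℕ) [Fact p.Prime] (A : Finset (ZMod p)) :
    ∑ a : ZMod p, ∑ b : ZMod p,
      ((((A ×ˢ A).filter (fun xy => xy.2 = a * xy.1 + b)).card : ℝ)
        - (A.card : ℝ)^2 / (p : ℝ))^2
      ≤ (p : ℝ) * (A.card : ℝ)^2 := by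
  have hp : (0 : ℝ) < p := by exact_mod_cast (Fact.out : p.Prime).pos
  have hcard : (Finset.univ : Finset (ZMod p)).card = p := by simp [ZMod.card]
  set n : ℝ := (A.card : ℝ) with hn
  set μ : ℝ := n ^ 2 / p with hμ
  have hgoal : ∑ a : ZMod p, ∑ b : ZMod p,
      ((((A ×ˢ A).filter (fun xy => xy.2 = a * xy.1 + b)).card : ℝ) - n^2/(p:ℝ))^2
      = ∑ a : ZMod p, ∑ b : ZMod p, ((lc A a b : ℝ) - μ)^2 := rfl
  rw [hgoal]
  have cast2 : ∑ a : ZMod p, ∑ b : ZMod p, ((lc A a b : ℝ))^2 ≤ p * n^2 + n^2 * n^2 := by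
    have := lc_sq_sum A
    calc ∑ a : ZMod p, ∑ b : ZMod p, ((lc A a b : ℝ))^2
        = ((∑ a : ZMod p, ∑ b : ZMod p, (lc A a b)^2 : ℕ) : ℝ) := by push_cast; rfl
      _ ≤ ((p * A.card ^ 2 + A.card ^ 2 * A.card ^ 2 : ℕ) : ℝ) := by exact_mod_cast this
      _ = p * n^2 + n^2 * n^2 := by push_cast; ring
  have step : ∀ a : ZMod p, ∑ b : ZMod p, ((lc A a b : ℝ) - μ)^2
      = (∑ b : ZMod p, ((lc A a b : ℝ))^2) - 2*μ*n^2 + p*μ^2 := by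
    intro a
    have hb : ∑ b : ZMod p, ((lc A a b : ℝ)) = n^2 := by
      calc ∑ b : ZMod p, ((lc A a b : ℝ)) = ((∑ b : ZMod p, lc A a b : ℕ) : ℝ) := by
            push_cast; rfl
        _ = n^2 := by rw [lc_row_sum A a, hn]; push_cast; ring
    have hrw : ∀ b : ZMod p, ((lc A a b : ℝ) - μ)^2
        = ((lc A a b : ℝ))^2 - 2*μ*(lc A a b : ℝ) + μ^2 := fun b => by ring
    simp_rw [hrw]
    rw [Finset.sum_add_distrib, Finset.sum_sub_distrib, ← Finset.mul_sum, hb,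
      Finset.sum_const, hcard, nsmul_eq_mul]
  calc ∑ a : ZMod p, ∑ b : ZMod p, ((lc A a b : ℝ) - μ)^2
      = ∑ a : ZMod p, ((∑ b : ZMod p, ((lc A a b : ℝ))^2) - 2*μ*n^2 + p*μ^2) :=
        Finset.sum_congr rfl fun a _ => step a
    _ = (∑ a : ZMod p, ∑ b : ZMod p, ((lc A a b : ℝ))^2) - p*(2*μ*n^2) + p*(p*μ^2) := by
        rw [Finset.sum_add_distrib, Finset.sum_sub_distrib, Finset.sum_const,
          Finset.sum_const, hcard, nsmul_eq_mul, nsmul_eq_mul]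
    _ ≤ (p * n^2 + n^2*n^2) - p*(2*μ*n^2) + p*(p*μ^2) := by linarith
    _ = p * n^2 := by rw [hμ]; field_simp; ring
end

section
/- Let G be a multiplicative subgroup of F_p^* with |G| ≥ p^{2/3}. Then for any λ, μ ∈ F_p^*, every element of F_p^* lies in the set G + λG + μG = {g1 + λg2 + μg3 : g1, g2, g3 ∈ G}. -/
open Finset Complex

namespace SumsetAux

variable {p : ℕ} [Fact p.Prime]

noncomputable def ψ : AddChar (ZMod p) ℂ := ZMod.stdAddChar

lemma orth (a : ZMod p) : ∑ t : ZMod p, ψ (t * a) = if a = 0 then (p : ℂ) else 0 := by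
  have := AddChar.sum_mulShift (ψ := (ψ : AddChar (ZMod p) ℂ)) a (ZMod.isPrimitive_stdAddChar p)
  simpa [ZMod.card p] using this

lemma conj_psi (a : ZMod p) : (starRingEnd ℂ) (ψ a) = ψ (-a) := by
  rw [AddChar.map_neg_eq_inv, ← Complex.inv_eq_conj (by simp)]

variable (G : Finset (ZMod p))

noncomputable def S (t : ZMod p) : ℂ := ∑ g ∈ G, ψ (t * g)

variable {G}
variable (hG0 : (0 : ZMod p) ∉ G) (hG1 : (1 : ZMod p) ∈ G)
    (hGmul : ∀ x ∈ G, ∀ y ∈ G, x * y ∈ G)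

include hG0 hGmul in
lemma image_mul {g : ZMod p} (hg : g ∈ G) : G.image (g * ·) = G := by
  have hgne : g ≠ 0 := fun h => hG0 (h ▸ hg)
  apply Finset.eq_of_subset_of_card_le
  · intro x hx
    simp only [Finset.mem_image] at hx
    obtain ⟨y, hy, rfl⟩ := hx
    exact hGmul g hg y hy
  · rw [Finset.card_image_of_injective _ (mul_right_injective₀ hgne)]

include hG0 hGmul in
lemma S_mul {g : ZMod p} (hg : g ∈ G) (t : ZMod p) : S G (t * g) = S G t := by
  conv_rhs => rw [S, ← image_mul hG0 hGmul hg,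
    Finset.sum_image (fun x _ y _ h => mul_right_injective₀ (fun h0 => hG0 (h0 ▸ hg)) h)]
  simp only [S]
  congr 1; ext h; ring_nf

lemma S_zero : S G 0 = (G.card : ℂ) := by simp [S]

lemma sum_normSq : ∑ t : ZMod p, ‖S G t‖ ^ 2 = (p : ℝ) * G.card := by
  have key : ∑ t : ZMod p, (S G t * (starRingEnd ℂ) (S G t)) = (p : ℂ) * G.card := by
    have expand : ∀ t : ZMod p, S G t * (starRingEnd ℂ) (S G t)
        = ∑ g ∈ G, ∑ h ∈ G, ψ (t * (g - h)) := by
      intro t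
      rw [S, map_sum, Finset.sum_mul_sum]
      refine Finset.sum_congr rfl fun g _ => Finset.sum_congr rfl fun h _ => ?_
      rw [conj_psi, ← AddChar.map_add_eq_mul]
      congr 1; ring
    simp_rw [expand]
    rw [Finset.sum_comm]
    have step : ∀ g ∈ G, ∑ h ∈ G, ∑ t : ZMod p, ψ (t * (g - h)) = (p : ℂ) := by
      intro g hg
      rw [Finset.sum_comm]
      calc ∑ t : ZMod p, ∑ h ∈ G, ψ (t * (g - h))
          = ∑ h ∈ G, ∑ t : ZMod p, ψ (t * (g - h)) := Finset.sum_comm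
        _ = ∑ h ∈ G, if g - h = 0 then (p : ℂ) else 0 := by
            exact Finset.sum_congr rfl fun h _ => orth (g - h)
        _ = ∑ h ∈ G, if h = g then (p : ℂ) else 0 := by
            refine Finset.sum_congr rfl fun h _ => ?_
            congr 1
            simp [sub_eq_zero, eq_comm]
        _ = (p : ℂ) := by rw [Finset.sum_ite_eq' G g (fun _ => (p:ℂ))]; simp [hg]
    rw [Finset.sum_congr rfl fun g hg => (Finset.sum_comm.symm.trans (step g hg))]
    rw [Finset.sum_const, nsmul_eq_mul, mul_comm]
  have cast : ((∑ t : ZMod p, ‖S G t‖ ^ 2 : ℝ) : ℂ) = ((p : ℝ) * G.card : ℝ) := by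
    push_cast
    rw [← key]
    refine Finset.sum_congr rfl fun t _ => ?_
    rw [Complex.mul_conj, Complex.normSq_eq_norm_sq]
    norm_cast
  exact_mod_cast cast


lemma sum_normSq_ne :
    ∑ t ∈ Finset.univ.erase (0 : ZMod p), ‖S G t‖ ^ 2
      = (p : ℝ) * G.card - (G.card : ℝ) ^ 2 := by
  have h := Finset.sum_erase_add Finset.univ (fun t => ‖S G t‖ ^ 2) (Finset.mem_univ (0 : ZMod p))
  rw [sum_normSq] at h
  simp only [S_zero, Complex.norm_natCast] at h
  linarith

lemma image_erase {a : ZMod p} (ha : a ≠ 0) :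
    (Finset.univ.erase (0 : ZMod p)).image (a * ·) = Finset.univ.erase 0 := by
  apply Finset.eq_of_subset_of_card_le
  · intro x hx
    simp only [Finset.mem_image, Finset.mem_erase, Finset.mem_univ, and_true] at hx ⊢
    obtain ⟨y, hy, rfl⟩ := hx
    exact mul_ne_zero ha hy
  · rw [Finset.card_image_of_injective _ (mul_right_injective₀ ha)]

include hG0 hG1 hGmul in
lemma pointwise_bound {t : ZMod p} (ht : t ≠ 0) :
    ‖S G t‖ ^ 2 ≤ (p : ℝ) - G.card := by
  have hcpos : (0 : ℝ) < G.card := by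
    exact_mod_cast Finset.card_pos.mpr ⟨1, hG1⟩
  have key : (G.card : ℝ) * ‖S G t‖ ^ 2 ≤ (p : ℝ) * G.card - (G.card : ℝ) ^ 2 := by
    have h1 : ∑ g ∈ G, ‖S G (t * g)‖ ^ 2 = (G.card : ℝ) * ‖S G t‖ ^ 2 := by
      rw [Finset.sum_congr rfl fun g hg => by rw [S_mul hG0 hGmul hg]]
      rw [Finset.sum_const, nsmul_eq_mul]
    have h2 : ∑ g ∈ G, ‖S G (t * g)‖ ^ 2 = ∑ u ∈ G.image (t * ·), ‖S G u‖ ^ 2 := by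
      rw [Finset.sum_image (fun x _ y _ h => mul_right_injective₀ ht h)]
    have h3 : G.image (t * ·) ⊆ Finset.univ.erase 0 := by
      intro x hx
      simp only [Finset.mem_image, Finset.mem_erase, Finset.mem_univ, and_true] at hx ⊢
      obtain ⟨y, hy, rfl⟩ := hx
      exact mul_ne_zero ht (fun h0 => hG0 (h0 ▸ hy))
    have h4 : ∑ u ∈ G.image (t * ·), ‖S G u‖ ^ 2
        ≤ ∑ u ∈ Finset.univ.erase (0 : ZMod p), ‖S G u‖ ^ 2 :=
      Finset.sum_le_sum_of_subset_of_nonneg h3 (fun _ _ _ => by positivity)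
    rw [← h1, h2, ← sum_normSq_ne]
    exact h4
  have := (mul_le_mul_iff_right₀ hcpos).mp (by nlinarith : (G.card : ℝ) * ‖S G t‖ ^ 2 ≤ (G.card : ℝ) * ((p : ℝ) - G.card))
  exact this


include hG0 hGmul in
lemma err_identity (lam mu ξ : ZMod p) :
    (G.card : ℂ) * ∑ t ∈ Finset.univ.erase (0 : ZMod p),
        S G t * S G (lam * t) * S G (mu * t) * ψ (-(t * ξ))
      = ∑ t ∈ Finset.univ.erase (0 : ZMod p),
        S G t * S G (lam * t) * S G (mu * t) * S G (-(t * ξ)) := by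
  have hgne : ∀ g ∈ G, g ≠ 0 := fun g hg h0 => hG0 (h0 ▸ hg)
  calc (G.card : ℂ) * ∑ t ∈ Finset.univ.erase (0 : ZMod p),
        S G t * S G (lam * t) * S G (mu * t) * ψ (-(t * ξ))
      = ∑ g ∈ G, ∑ t ∈ Finset.univ.erase (0 : ZMod p),
        S G t * S G (lam * t) * S G (mu * t) * ψ (-(t * ξ)) := by
        rw [Finset.sum_const, nsmul_eq_mul]
    _ = ∑ g ∈ G, ∑ t ∈ Finset.univ.erase (0 : ZMod p),
        S G t * S G (lam * t) * S G (mu * t) * ψ (-(t * ξ) * g) := by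
        refine Finset.sum_congr rfl fun g hg => ?_
        conv_lhs => rw [← image_erase (hgne g hg),
          Finset.sum_image (fun x _ y _ h => mul_right_injective₀ (hgne g hg) h)]
        refine Finset.sum_congr rfl fun t _ => ?_
        have e1 : S G (g * t) = S G t := by rw [mul_comm]; exact S_mul hG0 hGmul hg t
        have e2 : S G (lam * (g * t)) = S G (lam * t) := by
          rw [show lam * (g * t) = lam * t * g by ring]; exact S_mul hG0 hGmul hg _
        have e3 : S G (mu * (g * t)) = S G (mu * t) := by
          rw [show mu * (g * t) = mu * t * g by ring]; exact S_mul hG0 hGmul hg _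
        rw [e1, e2, e3, show -(g * t * ξ) = -(t * ξ) * g by ring]
    _ = ∑ t ∈ Finset.univ.erase (0 : ZMod p),
        S G t * S G (lam * t) * S G (mu * t) * S G (-(t * ξ)) := by
        rw [Finset.sum_comm]
        refine Finset.sum_congr rfl fun t _ => ?_
        rw [show (S G (-(t * ξ)) : ℂ) = ∑ g ∈ G, ψ (-(t * ξ) * g) from rfl, Finset.mul_sum]


include hG0 hG1 hGmul in
lemma err_norm {lam mu ξ : ZMod p} (hlam : lam ≠ 0) (hmu : mu ≠ 0) (hξ : ξ ≠ 0) :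
    ‖∑ t ∈ Finset.univ.erase (0 : ZMod p),
        S G t * S G (lam * t) * S G (mu * t) * S G (-(t * ξ))‖
      ≤ (G.card : ℝ) * ((p : ℝ) - G.card) ^ 2 := by
  set X : ℝ := (p : ℝ) - G.card with hXdef
  have hX0 : 0 ≤ X := by
    have h1 : G.card ≤ p := by
      have := Finset.card_le_card (Finset.subset_univ G)
      simpa [ZMod.card] using this
    have : (G.card : ℝ) ≤ (p : ℝ) := by exact_mod_cast h1
    simpa [hXdef] using sub_nonneg.mpr this
  have hsqrt : ∀ u : ZMod p, u ≠ 0 → ‖S G u‖ ≤ Real.sqrt X := by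
    intro u hu
    have h2 := pointwise_bound hG0 hG1 hGmul hu
    have : ‖S G u‖ = Real.sqrt (‖S G u‖ ^ 2) := (Real.sqrt_sq (norm_nonneg _)).symm
    rw [this]
    exact Real.sqrt_le_sqrt h2
  have hterm : ∀ t ∈ Finset.univ.erase (0 : ZMod p),
      ‖S G t * S G (lam * t) * S G (mu * t) * S G (-(t * ξ))‖
        ≤ ‖S G t‖ * ‖S G (lam * t)‖ * X := by
    intro t ht
    have htne : t ≠ 0 := (Finset.mem_erase.mp ht).1
    have hcd : ‖S G (mu * t)‖ * ‖S G (-(t * ξ))‖ ≤ X := by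
      have h1 := hsqrt (mu * t) (mul_ne_zero hmu htne)
      have h2 := hsqrt (-(t * ξ)) (neg_ne_zero.mpr (mul_ne_zero htne hξ))
      calc ‖S G (mu * t)‖ * ‖S G (-(t * ξ))‖
          ≤ Real.sqrt X * Real.sqrt X :=
            mul_le_mul h1 h2 (norm_nonneg _) (Real.sqrt_nonneg _)
        _ = X := Real.mul_self_sqrt hX0
    rw [norm_mul, norm_mul, norm_mul, mul_assoc]
    exact mul_le_mul_of_nonneg_left hcd (by positivity)
  have hAB : ∑ t ∈ Finset.univ.erase (0 : ZMod p), ‖S G t‖ * ‖S G (lam * t)‖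
      ≤ (G.card : ℝ) * X := by
    have h2 : ∑ t ∈ Finset.univ.erase (0 : ZMod p), ‖S G (lam * t)‖ ^ 2
        = ∑ t ∈ Finset.univ.erase (0 : ZMod p), ‖S G t‖ ^ 2 := by
      conv_rhs => rw [← image_erase hlam,
        Finset.sum_image (fun x _ y _ h => mul_right_injective₀ hlam h)]
    calc ∑ t ∈ Finset.univ.erase (0 : ZMod p), ‖S G t‖ * ‖S G (lam * t)‖
        ≤ ∑ t ∈ Finset.univ.erase (0 : ZMod p),
            (‖S G t‖ ^ 2 + ‖S G (lam * t)‖ ^ 2) / 2 := by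
          refine Finset.sum_le_sum fun t _ => ?_
          nlinarith [two_mul_le_add_sq ‖S G t‖ ‖S G (lam * t)‖]
      _ = (∑ t ∈ Finset.univ.erase (0 : ZMod p), ‖S G t‖ ^ 2
            + ∑ t ∈ Finset.univ.erase (0 : ZMod p), ‖S G (lam * t)‖ ^ 2) / 2 := by
          rw [← Finset.sum_add_distrib, ← Finset.sum_div]
      _ = (G.card : ℝ) * X := by
          rw [h2, sum_normSq_ne]; simp only [hXdef]; ring
  calc ‖∑ t ∈ Finset.univ.erase (0 : ZMod p),
        S G t * S G (lam * t) * S G (mu * t) * S G (-(t * ξ))‖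
      ≤ ∑ t ∈ Finset.univ.erase (0 : ZMod p),
        ‖S G t * S G (lam * t) * S G (mu * t) * S G (-(t * ξ))‖ := norm_sum_le _ _
    _ ≤ ∑ t ∈ Finset.univ.erase (0 : ZMod p), ‖S G t‖ * ‖S G (lam * t)‖ * X :=
        Finset.sum_le_sum hterm
    _ = (∑ t ∈ Finset.univ.erase (0 : ZMod p), ‖S G t‖ * ‖S G (lam * t)‖) * X := by
        rw [← Finset.sum_mul]
    _ ≤ (G.card : ℝ) * X * X := mul_le_mul_of_nonneg_right hAB hX0
    _ = (G.card : ℝ) * X ^ 2 := by ring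

end SumsetAux

open SumsetAux


/-- If `G ≤ F_p^*` is a multiplicative subgroup with `|G| ≥ p^{2/3}`, then for any
`λ, μ ∈ F_p^*` every element of `F_p^*` lies in `G + λG + μG`. -/
theorem sumset_covers_units (p : ℕ) [Fact p.Prime] (G : Finset (ZMod p))
    (hG0 : (0 : ZMod p) ∉ G) (hG1 : (1 : ZMod p) ∈ G)
    (hGmul : ∀ x ∈ G, ∀ y ∈ G, x * y ∈ G)
    (hcard : (G.card : ℝ) ≥ (p : ℝ) ^ ((2 : ℝ) / 3))
    (lam mu : ZMod p) (hlam : lam ≠ 0) (hmu : mu ≠ 0) :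
    ∀ ξ : ZMod p, ξ ≠ 0 → ∃ g₁ ∈ G, ∃ g₂ ∈ G, ∃ g₃ ∈ G,
      ξ = g₁ + lam * g₂ + mu * g₃ := by
  intro ξ hξ
  by_contra hcon
  push_neg at hcon
  set Tot : ℂ := ∑ t : ZMod p, S G t * S G (lam * t) * S G (mu * t) * ψ (-(t * ξ)) with hTot
  set err : ℂ := ∑ t ∈ Finset.univ.erase (0 : ZMod p),
      S G t * S G (lam * t) * S G (mu * t) * ψ (-(t * ξ)) with herr
  -- Step 1 : Tot = 0
  have expand : ∀ t : ZMod p, S G t * S G (lam * t) * S G (mu * t) * ψ (-(t * ξ))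
      = ∑ g₁ ∈ G, ∑ g₂ ∈ G, ∑ g₃ ∈ G, ψ (t * (g₃ + lam * g₂ + mu * g₁ - ξ)) := by
    intro t
    simp only [S, Finset.sum_mul, Finset.mul_sum]
    refine Finset.sum_congr rfl fun g₁ _ => Finset.sum_congr rfl fun g₂ _ =>
      Finset.sum_congr rfl fun g₃ _ => ?_
    rw [← AddChar.map_add_eq_mul, ← AddChar.map_add_eq_mul, ← AddChar.map_add_eq_mul]
    congr 1
    ring
  have h0 : Tot = 0 := by
    calc Tot = ∑ t : ZMod p, ∑ g₁ ∈ G, ∑ g₂ ∈ G, ∑ g₃ ∈ G,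
        ψ (t * (g₃ + lam * g₂ + mu * g₁ - ξ)) := Finset.sum_congr rfl fun t _ => expand t
      _ = ∑ g₁ ∈ G, ∑ g₂ ∈ G, ∑ g₃ ∈ G, ∑ t : ZMod p,
          ψ (t * (g₃ + lam * g₂ + mu * g₁ - ξ)) := by
          rw [Finset.sum_comm]
          refine Finset.sum_congr rfl fun g₁ _ => ?_
          rw [Finset.sum_comm]
          exact Finset.sum_congr rfl fun g₂ _ => Finset.sum_comm
      _ = 0 := by
          refine Finset.sum_eq_zero fun g₁ hg₁ => Finset.sum_eq_zero fun g₂ hg₂ =>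
            Finset.sum_eq_zero fun g₃ hg₃ => ?_
          rw [orth]
          have hne : g₃ + lam * g₂ + mu * g₁ - ξ ≠ 0 :=
            sub_ne_zero.mpr fun h => hcon g₃ hg₃ g₂ hg₂ g₁ hg₁ h.symm
          simp [hne]
  -- Step 2 : Tot = |G|³ + err
  have h1 : Tot = (G.card : ℂ) ^ 3 + err := by
    rw [hTot, ← Finset.sum_erase_add Finset.univ _ (Finset.mem_univ (0 : ZMod p)), herr]
    simp only [S_zero, mul_zero, zero_mul, neg_zero, AddChar.map_zero_eq_one, mul_one]
    ring
  -- Step 3 : err = -|G|³ and the norm bound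
  have herr3 : err = -(G.card : ℂ) ^ 3 := by
    have := h0 ▸ h1
    linear_combination -this
  have hID := err_identity hG0 hGmul (G := G) lam mu ξ
  rw [← herr, herr3] at hID
  have hnorm : ((G.card : ℝ)) * (G.card : ℝ) ^ 3
      ≤ (G.card : ℝ) * ((p : ℝ) - G.card) ^ 2 := by
    have hL : ‖(G.card : ℂ) * -(G.card : ℂ) ^ 3‖ = (G.card : ℝ) * (G.card : ℝ) ^ 3 := by
      simp [norm_mul, norm_pow]
    calc (G.card : ℝ) * (G.card : ℝ) ^ 3 = ‖(G.card : ℂ) * -(G.card : ℂ) ^ 3‖ := hL.symm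
      _ = ‖∑ t ∈ Finset.univ.erase (0 : ZMod p),
            S G t * S G (lam * t) * S G (mu * t) * S G (-(t * ξ))‖ := by rw [hID]
      _ ≤ (G.card : ℝ) * ((p : ℝ) - G.card) ^ 2 := err_norm hG0 hG1 hGmul hlam hmu hξ
  -- Step 4 : numeric contradiction
  have hcpos : (0 : ℝ) < G.card := by exact_mod_cast Finset.card_pos.mpr ⟨1, hG1⟩
  have hc1 : (1 : ℝ) ≤ G.card := by exact_mod_cast Finset.card_pos.mpr ⟨1, hG1⟩
  have hcp : (G.card : ℝ) ≤ p := by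
    have := Finset.card_le_card (Finset.subset_univ G)
    simp only [Finset.card_univ, ZMod.card] at this
    exact_mod_cast this
  have hkey : (G.card : ℝ) ^ 3 ≤ ((p : ℝ) - G.card) ^ 2 :=
    (mul_le_mul_iff_right₀ hcpos).mp hnorm
  have hp2 : (p : ℝ) ^ 2 ≤ (G.card : ℝ) ^ 3 := by
    have h1 : ((p : ℝ) ^ ((2 : ℝ) / 3)) ^ (3 : ℕ) ≤ (G.card : ℝ) ^ (3 : ℕ) :=
      pow_le_pow_left₀ (Real.rpow_nonneg (Nat.cast_nonneg p) _) hcard 3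
    have h2 : ((p : ℝ) ^ ((2 : ℝ) / 3)) ^ (3 : ℕ) = (p : ℝ) ^ 2 := by
      rw [← Real.rpow_natCast ((p : ℝ) ^ ((2 : ℝ) / 3)) 3,
        ← Real.rpow_mul (Nat.cast_nonneg p),
        show ((2 : ℝ) / 3) * ((3 : ℕ) : ℝ) = ((2 : ℕ) : ℝ) by norm_num,
        Real.rpow_natCast]
    rw [h2] at h1
    exact h1
  nlinarith [hp2, hkey, hc1, hcp]
end

section
/- Let G be a multiplicative subgroup of F_p^* with |G| > p^{2/3}. Then for every λ ∈ F_p^* and every ξ ∈ F_p^*, there exist u1, u2, v1, v2 ∈ G with v1 ≠ v2 and λu1 − u2 = ξ(v1 − v2); in particular every element of F_p^* can be written as (λu1 − u2)/(v1 − v2) with u1,u2,v1,v2 ∈ G. -/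
open Finset

open Finset AddChar

namespace RatioRep

variable {p : ℕ} [NeZero p]

lemma ortho (t : ZMod p) :
    ∑ a : ZMod p, ZMod.stdAddChar (t * a) = if t = 0 then (p : ℂ) else 0 := by
  split_ifs with h
  · simp [h, Finset.card_univ]
  · have := AddChar.sum_eq_zero_of_ne_one (ZMod.isPrimitive_stdAddChar p h)
    simpa using this

lemma psi_conj (x : ZMod p) :
    (starRingEnd ℂ) (ZMod.stdAddChar x) = ZMod.stdAddChar (-x) := by
  rw [ZMod.stdAddChar_apply, ZMod.stdAddChar_apply, ← Circle.coe_inv_eq_conj]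
  congr 1
  exact ((ZMod.toCircle (N := p)).map_neg_eq_inv x).symm

noncomputable def S (G : Finset (ZMod p)) (a : ZMod p) : ℂ :=
  ∑ x ∈ G, ZMod.stdAddChar (a * x)

lemma S_zero (G : Finset (ZMod p)) : S G 0 = (G.card : ℂ) := by
  simp [S]

lemma S_conj (G : Finset (ZMod p)) (a : ZMod p) :
    (starRingEnd ℂ) (S G a) = S G (-a) := by
  rw [S, map_sum]
  exact Finset.sum_congr rfl fun x _ => by rw [psi_conj, neg_mul]

lemma S_mul_Sneg (G : Finset (ZMod p)) (a : ZMod p) :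
    S G a * S G (-a) = (‖S G a‖ ^ 2 : ℝ) := by
  rw [← S_conj, Complex.mul_conj, Complex.normSq_eq_norm_sq]


lemma parseval (G : Finset (ZMod p)) :
    ∑ a : ZMod p, (‖S G a‖ ^ 2 : ℝ) = (p : ℝ) * G.card := by
  have key : ∑ a : ZMod p, S G a * S G (-a) = (p : ℂ) * G.card := by
    have expand : ∀ a : ZMod p, S G a * S G (-a)
        = ∑ x ∈ G, ∑ y ∈ G, ZMod.stdAddChar ((x - y) * a) := by
      intro a
      rw [S, S, Finset.sum_mul_sum]
      exact Finset.sum_congr rfl fun x _ => Finset.sum_congr rfl fun y _ => by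
        rw [← AddChar.map_add_eq_mul]; ring_nf
    calc ∑ a : ZMod p, S G a * S G (-a)
        = ∑ x ∈ G, ∑ y ∈ G, ∑ a : ZMod p, ZMod.stdAddChar ((x - y) * a) := by
          simp_rw [expand]; rw [Finset.sum_comm]
          exact Finset.sum_congr rfl fun x _ => Finset.sum_comm
      _ = ∑ x ∈ G, ∑ y ∈ G, if x - y = 0 then (p : ℂ) else 0 := by
          simp_rw [ortho]
      _ = (p : ℂ) * G.card := by
          simp_rw [sub_eq_zero]
          rw [Finset.sum_comm]
          simp [Finset.sum_ite_eq, mul_comm]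
  have := key
  simp_rw [S_mul_Sneg] at this
  exact_mod_cast this


lemma S_invariant [Fact p.Prime] (G : Finset (ZMod p)) (hG0 : (0 : ZMod p) ∉ G)
    (hGmul : ∀ x ∈ G, ∀ y ∈ G, x * y ∈ G) {g : ZMod p} (hg : g ∈ G) (a : ZMod p) :
    S G (a * g) = S G a := by
  have hg0 : g ≠ 0 := fun h => hG0 (h ▸ hg)
  have hinj : Function.Injective (fun x : ZMod p => g * x) :=
    fun x y h => mul_left_cancel₀ hg0 h
  have himg : G.image (fun x : ZMod p => g * x) = G := by
    apply Finset.eq_of_subset_of_card_le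
    · intro y hy
      obtain ⟨x, hx, rfl⟩ := Finset.mem_image.mp hy
      exact hGmul g hg x hx
    · rw [Finset.card_image_of_injective _ hinj]
  simp only [S]
  conv_rhs => rw [← himg]
  rw [Finset.sum_image fun x _ y _ h => hinj h]
  exact Finset.sum_congr rfl fun x _ => by ring_nf

lemma S_bound [Fact p.Prime] (G : Finset (ZMod p)) (hG0 : (0 : ZMod p) ∉ G)
    (hGmul : ∀ x ∈ G, ∀ y ∈ G, x * y ∈ G) (hne : G.Nonempty) {a : ZMod p} (ha : a ≠ 0) :
    ‖S G a‖ ^ 2 ≤ (p : ℝ) - G.card := by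
  have hn : 0 < (G.card : ℝ) := by exact_mod_cast hne.card_pos
  rw [← mul_le_mul_iff_right₀ hn]
  have himg : ∀ b ∈ G.image (fun g : ZMod p => a * g), ‖S G b‖ ^ 2 = ‖S G a‖ ^ 2 := by
    intro b hb
    obtain ⟨g, hg, rfl⟩ := Finset.mem_image.mp hb
    rw [S_invariant G hG0 hGmul hg]
  have hinj : Function.Injective (fun g : ZMod p => a * g) :=
    fun x y h => mul_left_cancel₀ ha h
  have hsub : G.image (fun g : ZMod p => a * g) ⊆ Finset.univ.erase 0 := by
    intro b hb
    obtain ⟨g, hg, rfl⟩ := Finset.mem_image.mp hb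
    exact Finset.mem_erase.mpr ⟨mul_ne_zero ha (fun h => hG0 (h ▸ hg)), Finset.mem_univ _⟩
  have h1 : (G.card : ℝ) * ‖S G a‖ ^ 2
      = ∑ b ∈ G.image (fun g : ZMod p => a * g), ‖S G b‖ ^ 2 := by
    rw [Finset.sum_congr rfl himg, Finset.sum_const, Finset.card_image_of_injective _ hinj,
      nsmul_eq_mul]
  have h2 : ∑ b ∈ G.image (fun g : ZMod p => a * g), ‖S G b‖ ^ 2
      ≤ ∑ b ∈ Finset.univ.erase 0, ‖S G b‖ ^ 2 :=
    Finset.sum_le_sum_of_subset_of_nonneg hsub (fun _ _ _ => sq_nonneg _)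
  have h3 : ∑ b ∈ Finset.univ.erase 0, ‖S G b‖ ^ 2
      = (p : ℝ) * G.card - (G.card : ℝ) ^ 2 := by
    have := parseval G
    rw [← Finset.add_sum_erase _ _ (Finset.mem_univ (0 : ZMod p))] at this
    rw [S_zero] at this
    simp only [Complex.norm_natCast] at this
    nlinarith [this]
  rw [h1]
  calc _ ≤ (p : ℝ) * G.card - (G.card : ℝ) ^ 2 := h2.trans_eq h3
    _ = (G.card : ℝ) * ((p : ℝ) - G.card) := by ring


lemma sum_erase_sq [Fact p.Prime] (G : Finset (ZMod p)) :
    ∑ b ∈ Finset.univ.erase (0 : ZMod p), ‖S G b‖ ^ 2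
      = (p : ℝ) * G.card - (G.card : ℝ) ^ 2 := by
  have := parseval G
  rw [← Finset.add_sum_erase _ _ (Finset.mem_univ (0 : ZMod p))] at this
  rw [S_zero] at this
  simp only [Complex.norm_natCast] at this
  nlinarith [this]

lemma sum_reindex [Fact p.Prime] (G : Finset (ZMod p)) {c : ZMod p} (hc : c ≠ 0) :
    ∑ a ∈ Finset.univ.erase (0 : ZMod p), ‖S G (c * a)‖ ^ 2
      = ∑ b ∈ Finset.univ.erase (0 : ZMod p), ‖S G b‖ ^ 2 := by
  refine Finset.sum_nbij' (fun a => c * a) (fun b => c⁻¹ * b) ?_ ?_ ?_ ?_ ?_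
  · intro a ha
    exact Finset.mem_erase.mpr ⟨mul_ne_zero hc (Finset.mem_erase.mp ha).1, Finset.mem_univ _⟩
  · intro b hb
    exact Finset.mem_erase.mpr
      ⟨mul_ne_zero (inv_ne_zero hc) (Finset.mem_erase.mp hb).1, Finset.mem_univ _⟩
  · intro a _
    field_simp
  · intro b _
    field_simp
  · intro a _
    rfl

lemma S_norm_neg (G : Finset (ZMod p)) (a : ZMod p) : ‖S G (-a)‖ = ‖S G a‖ := by
  rw [← S_conj]
  exact RCLike.norm_conj _

end RatioRep

open RatioRep

/-- If `G ≤ F_p^*` with `|G| > p^{2/3}`, then for every `λ, ξ ∈ F_p^*` there exist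
`u₁, u₂, v₁, v₂ ∈ G` with `v₁ ≠ v₂` and `λu₁ − u₂ = ξ(v₁ − v₂)`. -/
theorem ratio_representation (p : ℕ) [Fact p.Prime] (G : Finset (ZMod p))
    (hG0 : (0 : ZMod p) ∉ G) (hG1 : (1 : ZMod p) ∈ G)
    (hGmul : ∀ x ∈ G, ∀ y ∈ G, x * y ∈ G)
    (hcard : (G.card : ℝ) > (p : ℝ) ^ ((2 : ℝ) / 3))
    (lam ξ : ZMod p) (hlam : lam ≠ 0) (hξ : ξ ≠ 0) :
    ∃ u₁ ∈ G, ∃ u₂ ∈ G, ∃ v₁ ∈ G, ∃ v₂ ∈ G,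
      v₁ ≠ v₂ ∧ lam * u₁ - u₂ = ξ * (v₁ - v₂) := by
  have hp : p.Prime := Fact.out
  haveI : NeZero p := ⟨hp.ne_zero⟩
  by_contra hcon
  push_neg at hcon
  set n := G.card with hn
  have hne : G.Nonempty := ⟨1, hG1⟩
  have hn1 : 1 ≤ n := Finset.card_pos.mpr hne
  have hnp : n < p := by
    have hsub : G ⊆ Finset.univ.erase (0 : ZMod p) := fun x hx =>
      Finset.mem_erase.mpr ⟨fun h => hG0 (h ▸ hx), Finset.mem_univ _⟩
    have := Finset.card_le_card hsub
    rw [Finset.card_erase_of_mem (Finset.mem_univ _), Finset.card_univ, ZMod.card] at this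
    omega
  -- the quadruple-counting set
  set Q : Finset (((ZMod p) × (ZMod p)) × ((ZMod p) × (ZMod p))) :=
    ((G ×ˢ G) ×ˢ (G ×ˢ G)).filter
      (fun q => lam * q.2.2 - q.2.1 = ξ * (q.1.2 - q.1.1)) with hQ
  -- degenerate bound
  have hQle : Q.card ≤ n * n := by
    rw [← Finset.card_product G G]
    apply Finset.card_le_card_of_injOn (fun q => (q.2.2, q.1.2))
    · intro q hq
      rw [Finset.mem_coe, hQ, Finset.mem_filter, Finset.mem_product] at hq
      obtain ⟨⟨h1, h2⟩, -⟩ := hq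
      rw [Finset.mem_product] at h1 h2
      exact Finset.mem_product.mpr ⟨h2.2, h1.2⟩
    · intro q hq q' hq' heq
      rw [Finset.coe_filter, Set.mem_setOf_eq] at hq hq'
      obtain ⟨hqm, hqe⟩ := hq
      obtain ⟨hq'm, hq'e⟩ := hq'
      rw [Finset.mem_product] at hqm hq'm
      obtain ⟨h1, h2⟩ := hqm
      obtain ⟨h1', h2'⟩ := hq'm
      rw [Finset.mem_product] at h1 h2 h1' h2'
      have hv : q.1.2 = q.1.1 := by
        by_contra hvne
        exact hcon q.2.2 h2.2 q.2.1 h2.1 q.1.2 h1.2 q.1.1 h1.1 hvne hqe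
      have hv' : q'.1.2 = q'.1.1 := by
        by_contra hvne
        exact hcon q'.2.2 h2'.2 q'.2.1 h2'.1 q'.1.2 h1'.2 q'.1.1 h1'.1 hvne hq'e
      have hu : q.2.1 = lam * q.2.2 := by
        rw [hv] at hqe; rw [sub_self, mul_zero] at hqe
        linear_combination -hqe
      have hu' : q'.2.1 = lam * q'.2.2 := by
        rw [hv'] at hq'e; rw [sub_self, mul_zero] at hq'e
        linear_combination -hq'e
      simp only [Prod.mk.injEq] at heq
      obtain ⟨e1, e2⟩ := heq
      have : q.1 = q'.1 := Prod.ext (by rw [← hv, ← hv', e2]) e2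
      have : q.2 = q'.2 := Prod.ext (by rw [hu, hu', e1]) e1
      exact Prod.ext ‹q.1 = q'.1› this
  -- expansion of the fourfold character sum
  have expand : ∀ a : ZMod p,
      S G (lam * a) * S G (-a) * S G (-(ξ * a)) * S G (ξ * a)
        = ∑ v₂ ∈ G, ∑ v₁ ∈ G, ∑ u₂ ∈ G, ∑ u₁ ∈ G,
            ZMod.stdAddChar ((lam * u₁ - u₂ - ξ * (v₁ - v₂)) * a) := by
    intro a
    simp only [S, Finset.sum_mul, Finset.mul_sum]
    refine Finset.sum_congr rfl fun v₂ _ => Finset.sum_congr rfl fun v₁ _ =>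
      Finset.sum_congr rfl fun u₂ _ => Finset.sum_congr rfl fun u₁ _ => ?_
    rw [show (lam * u₁ - u₂ - ξ * (v₁ - v₂)) * a
        = lam * a * u₁ + (-a * u₂ + (-(ξ * a) * v₁ + ξ * a * v₂)) by ring,
      AddChar.map_add_eq_mul, AddChar.map_add_eq_mul, AddChar.map_add_eq_mul]
    ring
  -- main identity
  have hident : ∑ a : ZMod p,
      S G (lam * a) * S G (-a) * S G (-(ξ * a)) * S G (ξ * a) = (p : ℂ) * Q.card := by
    simp_rw [expand]
    rw [Finset.sum_comm]
    have hQc : ((Q.card : ℕ) : ℂ)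
        = ∑ v₂ ∈ G, ∑ v₁ ∈ G, ∑ u₂ ∈ G, ∑ u₁ ∈ G,
            (if lam * u₁ - u₂ = ξ * (v₁ - v₂) then (1 : ℂ) else 0) := by
      rw [hQ, Finset.card_filter]
      push_cast
      simp only [Finset.sum_product]
    rw [hQc, Finset.mul_sum]
    refine Finset.sum_congr rfl fun v₂ _ => ?_
    rw [Finset.sum_comm, Finset.mul_sum]
    refine Finset.sum_congr rfl fun v₁ _ => ?_
    rw [Finset.sum_comm, Finset.mul_sum]
    refine Finset.sum_congr rfl fun u₂ _ => ?_
    rw [Finset.sum_comm, Finset.mul_sum]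
    refine Finset.sum_congr rfl fun u₁ _ => ?_
    rw [ortho (lam * u₁ - u₂ - ξ * (v₁ - v₂))]
    simp only [sub_eq_zero]
    split_ifs <;> ring
  -- split off the a = 0 term
  have hsplit : (p : ℂ) * Q.card = (n : ℂ) ^ 4
      + ∑ a ∈ Finset.univ.erase (0 : ZMod p),
          S G (lam * a) * S G (-a) * S G (-(ξ * a)) * S G (ξ * a) := by
    rw [← hident, ← Finset.add_sum_erase _ _ (Finset.mem_univ (0 : ZMod p))]
    congr 1
    simp only [mul_zero, neg_zero, S_zero]
    ring
  -- norm bound on the error term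
  have hterm : ∀ a ∈ Finset.univ.erase (0 : ZMod p),
      ‖S G (lam * a) * S G (-a) * S G (-(ξ * a)) * S G (ξ * a)‖
        ≤ ((p : ℝ) - n) * ((‖S G (lam * a)‖ ^ 2 + ‖S G a‖ ^ 2) / 2) := by
    intro a ha
    have ha0 : a ≠ 0 := (Finset.mem_erase.mp ha).1
    have hξa : ξ * a ≠ 0 := mul_ne_zero hξ ha0
    have hz2 : ‖S G (ξ * a)‖ ^ 2 ≤ (p : ℝ) - n := S_bound G hG0 hGmul hne hξa
    have hx : (0:ℝ) ≤ ‖S G (lam * a)‖ := norm_nonneg _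
    have hy : (0:ℝ) ≤ ‖S G a‖ := norm_nonneg _
    have hz : (0:ℝ) ≤ ‖S G (ξ * a)‖ := norm_nonneg _
    rw [norm_mul, norm_mul, norm_mul, S_norm_neg, S_norm_neg]
    nlinarith [sq_nonneg (‖S G (lam * a)‖ - ‖S G a‖), sq_nonneg (‖S G (ξ * a)‖),
      mul_nonneg hx hy, sq_nonneg (‖S G (lam * a)‖ + ‖S G a‖)]
  have hEbound : ‖∑ a ∈ Finset.univ.erase (0 : ZMod p),
      S G (lam * a) * S G (-a) * S G (-(ξ * a)) * S G (ξ * a)‖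
        ≤ ((p : ℝ) - n) * ((p : ℝ) * n - (n : ℝ) ^ 2) := by
    refine (norm_sum_le _ _).trans ?_
    refine (Finset.sum_le_sum hterm).trans_eq ?_
    rw [← Finset.mul_sum]
    congr 1
    rw [← Finset.sum_div, Finset.sum_add_distrib, sum_reindex G hlam, sum_erase_sq]
    ring
  -- convert to a real inequality
  have hElower : (p : ℝ) * Q.card ≥ (n : ℝ) ^ 4 - ((p : ℝ) - n) * ((p : ℝ) * n - (n : ℝ) ^ 2) := by
    have hE : ∑ a ∈ Finset.univ.erase (0 : ZMod p),
        S G (lam * a) * S G (-a) * S G (-(ξ * a)) * S G (ξ * a)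
          = (((p : ℝ) * Q.card - (n : ℝ) ^ 4 : ℝ) : ℂ) := by
      have := hsplit
      push_cast
      push_cast at this
      linear_combination -this
    rw [hE] at hEbound
    rw [Complex.norm_real] at hEbound
    have := abs_le.mp hEbound
    linarith [this.1]
  -- the cube inequality
  have hcube : (p : ℝ) ^ 2 < (n : ℝ) ^ 3 := by
    have hp0 : (0:ℝ) ≤ (p : ℝ) := Nat.cast_nonneg _
    have h1 : ((p : ℝ) ^ ((2:ℝ)/3)) ^ (3:ℕ) < (n : ℝ) ^ (3:ℕ) :=
      pow_lt_pow_left₀ hcard (Real.rpow_nonneg hp0 _) (by norm_num)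
    calc (p : ℝ) ^ 2 = ((p : ℝ) ^ ((2:ℝ)/3)) ^ (3:ℕ) := by
          rw [← Real.rpow_natCast ((p : ℝ) ^ ((2:ℝ)/3)) 3, ← Real.rpow_mul hp0]
          norm_num
      _ < (n : ℝ) ^ 3 := h1
  -- final contradiction
  have hQr : (Q.card : ℝ) ≤ (n : ℝ) * n := by exact_mod_cast hQle
  have hnr1 : (1:ℝ) ≤ (n : ℝ) := by exact_mod_cast hn1
  have hnpr : (n : ℝ) < (p : ℝ) := by exact_mod_cast hnp
  nlinarith [hElower, hQr, hcube, hnr1, hnpr,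
    mul_le_mul_of_nonneg_left hQr (Nat.cast_nonneg p : (0:ℝ) ≤ p)]
end

section
/- Let G be a multiplicative subgroup of F_p^* with |G| > p^{2/3}, and let λ, ξ ∈ F_p^*. Then the number N of quadruples (u1,u2,v1,v2) ∈ G^4 with λu1 − u2 = ξ(v1 − v2) satisfies |N − |G|^4/p| < p|G| − |G|^2. -/
open Finset

private lemma mul_le_of_sq_le_sq' {x y c : ℝ} (hx : 0 ≤ x) (hy : 0 ≤ y)
    (h1 : x ^ 2 ≤ c) (h2 : y ^ 2 ≤ c) : x * y ≤ c := by
  nlinarith [sq_nonneg (x - y)]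

/-- If `G ≤ F_p^*` with `|G| > p^{2/3}` and `λ, ξ ∈ F_p^*`, then the number `N` of
quadruples `(u₁,u₂,v₁,v₂) ∈ G⁴` with `λu₁ − u₂ = ξ(v₁ − v₂)` satisfies
`|N − |G|⁴/p| < p|G| − |G|²`. -/
theorem quadruple_count_asymptotic (p : ℕ) [Fact p.Prime] (G : Finset (ZMod p))
    (hG0 : (0 : ZMod p) ∉ G) (hG1 : (1 : ZMod p) ∈ G)
    (hGmul : ∀ x ∈ G, ∀ y ∈ G, x * y ∈ G)
    (hcard : (G.card : ℝ) > (p : ℝ) ^ ((2 : ℝ) / 3))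
    (lam ξ : ZMod p) (hlam : lam ≠ 0) (hξ : ξ ≠ 0) :
    |(((G ×ˢ G ×ˢ G ×ˢ G).filter (fun t =>
        lam * t.1 - t.2.1 = ξ * (t.2.2.1 - t.2.2.2))).card : ℝ)
      - (G.card : ℝ)^4 / (p : ℝ)|
      < (p : ℝ) * (G.card : ℝ) - (G.card : ℝ)^2 := by
  classical
  have hp : p.Prime := Fact.out
  have hp1 : 1 < p := hp.one_lt
  have hppos : (0 : ℝ) < p := by exact_mod_cast hp.pos
  -- cardinality facts
  have hGpos : 0 < G.card := Finset.card_pos.2 ⟨1, hG1⟩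
  have hgposR : (0 : ℝ) < G.card := by exact_mod_cast hGpos
  have hGlt : G.card < p := by
    have hne : G ≠ Finset.univ := by
      intro h
      exact hG0 (h ▸ Finset.mem_univ _)
    have := (Finset.card_lt_iff_ne_univ G).2 hne
    rwa [ZMod.card] at this
  have hgltR : (G.card : ℝ) < p := by exact_mod_cast hGlt
  have hGne : ∀ g ∈ G, g ≠ 0 := fun g hg h0 => hG0 (h0 ▸ hg)
  -- the standard additive character
  set ψ : AddChar (ZMod p) ℂ := ZMod.stdAddChar with hψ
  have horth : ∀ x : ZMod p, ∑ a : ZMod p, ψ (a * x) = if x = 0 then (p : ℂ) else 0 := by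
    intro x
    rw [hψ, AddChar.sum_mulShift x (ZMod.isPrimitive_stdAddChar p), ZMod.card]
    split <;> simp
  have hψconj : ∀ x : ZMod p, ψ (-x) = starRingEnd ℂ (ψ x) := fun x => by
    rw [hψ, ZMod.stdAddChar_apply, ZMod.stdAddChar_apply, ← Circle.coe_inv_eq_conj,
      ← AddChar.map_neg_eq_inv]
  -- the exponential sum over G
  set S : ZMod p → ℂ := fun t => ∑ w ∈ G, ψ (t * w) with hS
  have hS0 : S 0 = (G.card : ℂ) := by
    simp [hS]
  have hSconj : ∀ t : ZMod p, S (-t) = starRingEnd ℂ (S t) := by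
    intro t
    simp only [hS, map_sum, ← hψconj, neg_mul]
  have hSnormneg : ∀ t : ZMod p, ‖S (-t)‖ = ‖S t‖ := fun t => by
    rw [hSconj, RCLike.norm_conj]
  -- multiplicative invariance of S
  have himg : ∀ g ∈ G, G.image (fun w => g * w) = G := by
    intro g hg
    apply Finset.eq_of_subset_of_card_le
    · intro x hx
      simp only [Finset.mem_image] at hx
      obtain ⟨w, hw, rfl⟩ := hx
      exact hGmul g hg w hw
    · rw [Finset.card_image_of_injective _ (mul_right_injective₀ (hGne g hg))]
  have hSmul : ∀ g ∈ G, ∀ t : ZMod p, S (t * g) = S t := by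
    intro g hg t
    show ∑ w ∈ G, ψ (t * g * w) = ∑ w ∈ G, ψ (t * w)
    conv_rhs => rw [← himg g hg]
    rw [Finset.sum_image (fun x _ y _ h => mul_right_injective₀ (hGne g hg) h)]
    exact Finset.sum_congr rfl fun w _ => by rw [mul_assoc]
  -- Parseval
  have hpars : ∑ b : ZMod p, S b * S (-b) = (p : ℂ) * G.card := by
    have h1 : ∀ b : ZMod p, S b * S (-b) = ∑ w ∈ G, ∑ w' ∈ G, ψ (b * (w - w')) := by
      intro b
      rw [show S b * S (-b) = (∑ w ∈ G, ψ (b * w)) * (∑ w' ∈ G, ψ ((-b) * w')) from rfl,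
        Finset.sum_mul_sum]
      exact Finset.sum_congr rfl fun w _ => Finset.sum_congr rfl fun w' _ => by
        rw [← AddChar.map_add_eq_mul]; congr 1; ring
    simp only [h1]
    rw [Finset.sum_comm]
    calc ∑ w ∈ G, ∑ b : ZMod p, ∑ w' ∈ G, ψ (b * (w - w'))
        = ∑ w ∈ G, ∑ w' ∈ G, ∑ b : ZMod p, ψ (b * (w - w')) := by
          exact Finset.sum_congr rfl fun w _ => Finset.sum_comm
      _ = ∑ w ∈ G, ∑ w' ∈ G, if w = w' then (p : ℂ) else 0 := by
          refine Finset.sum_congr rfl fun w _ => Finset.sum_congr rfl fun w' _ => ?_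
          rw [horth]
          simp only [sub_eq_zero]
      _ = ∑ w ∈ G, (p : ℂ) := by
          refine Finset.sum_congr rfl fun w hw => ?_
          rw [Finset.sum_ite_eq G w (fun _ => (p : ℂ)), if_pos hw]
      _ = (p : ℂ) * G.card := by
          rw [Finset.sum_const, nsmul_eq_mul]; ring
  have hpars' : ∑ b : ZMod p, ‖S b‖ ^ 2 = (p : ℝ) * G.card := by
    have h2 : ∀ b : ZMod p, S b * S (-b) = ((‖S b‖ : ℝ) : ℂ) ^ 2 := by
      intro b
      rw [hSconj, Complex.mul_conj, Complex.normSq_eq_norm_sq]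
      push_cast
      ring
    have h3 : ((∑ b : ZMod p, ‖S b‖ ^ 2 : ℝ) : ℂ) = ((p : ℝ) * G.card : ℝ) := by
      push_cast
      rw [← hpars]
      exact Finset.sum_congr rfl fun b _ => (h2 b).symm
    exact_mod_cast h3
  have htot : ∑ b ∈ Finset.univ.erase (0 : ZMod p), ‖S b‖ ^ 2
      = (p : ℝ) * G.card - (G.card : ℝ) ^ 2 := by
    rw [Finset.sum_erase_eq_sub (Finset.mem_univ (0 : ZMod p)), hpars', hS0]
    norm_num
  -- max bound for nonzero a
  have hmax : ∀ a : ZMod p, a ≠ 0 → ‖S a‖ ^ 2 ≤ (p : ℝ) - G.card := by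
    intro a ha
    have key : (G.card : ℝ) * ‖S a‖ ^ 2 ≤ (p : ℝ) * G.card - (G.card : ℝ) ^ 2 := by
      have himg2 : G.image (fun g => a * g) ⊆ Finset.univ.erase (0 : ZMod p) := by
        intro x hx
        simp only [Finset.mem_image] at hx
        obtain ⟨g, hg, rfl⟩ := hx
        exact Finset.mem_erase.2 ⟨mul_ne_zero ha (hGne g hg), Finset.mem_univ _⟩
      calc (G.card : ℝ) * ‖S a‖ ^ 2 = ∑ _g ∈ G, ‖S a‖ ^ 2 := by
            rw [Finset.sum_const, nsmul_eq_mul]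
        _ = ∑ g ∈ G, ‖S (a * g)‖ ^ 2 :=
            (Finset.sum_congr rfl (fun g hg => by rw [hSmul g hg a])).symm
        _ = ∑ b ∈ G.image (fun g => a * g), ‖S b‖ ^ 2 := by
            rw [Finset.sum_image (fun x _ y _ h => mul_left_cancel₀ ha h)]
        _ ≤ ∑ b ∈ Finset.univ.erase (0 : ZMod p), ‖S b‖ ^ 2 :=
            Finset.sum_le_sum_of_subset_of_nonneg himg2 (fun _ _ _ => sq_nonneg _)
        _ = (p : ℝ) * G.card - (G.card : ℝ) ^ 2 := htot
    nlinarith [key, hgposR]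
  -- the key identity
  set N := ((G ×ˢ G ×ˢ G ×ˢ G).filter (fun t =>
      lam * t.1 - t.2.1 = ξ * (t.2.2.1 - t.2.2.2))).card with hN
  have hkey : (N : ℂ) * p
      = ∑ a : ZMod p, S (a * lam) * S (-a) * (S (-(a * ξ)) * S (a * ξ)) := by
    have expand : ∀ a : ZMod p,
        ∑ t ∈ G ×ˢ G ×ˢ G ×ˢ G, ψ (a * (lam * t.1 - t.2.1 - ξ * (t.2.2.1 - t.2.2.2)))
          = S (a * lam) * S (-a) * (S (-(a * ξ)) * S (a * ξ)) := by
      intro a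
      rw [show S (a * lam) * S (-a)
            = ∑ u1 ∈ G, ∑ u2 ∈ G, ψ ((a * lam) * u1) * ψ ((-a) * u2) from
          Finset.sum_mul_sum G G _ _,
        show S (-(a * ξ)) * S (a * ξ)
            = ∑ v1 ∈ G, ∑ v2 ∈ G, ψ ((-(a * ξ)) * v1) * ψ ((a * ξ) * v2) from
          Finset.sum_mul_sum G G _ _]
      simp only [Finset.sum_product]
      rw [Finset.sum_mul]
      refine Finset.sum_congr rfl fun u1 _ => ?_
      rw [Finset.sum_mul]
      refine Finset.sum_congr rfl fun u2 _ => ?_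
      rw [Finset.mul_sum]
      refine Finset.sum_congr rfl fun v1 _ => ?_
      rw [Finset.mul_sum]
      refine Finset.sum_congr rfl fun v2 _ => ?_
      rw [← AddChar.map_add_eq_mul, ← AddChar.map_add_eq_mul, ← AddChar.map_add_eq_mul]
      exact congrArg ψ (by ring)
    have step1 : (N : ℂ) * p = ∑ t ∈ G ×ˢ G ×ˢ G ×ˢ G,
        if lam * t.1 - t.2.1 - ξ * (t.2.2.1 - t.2.2.2) = 0 then (p : ℂ) else 0 := by
      simp only [sub_eq_zero]
      rw [← Finset.sum_filter, Finset.sum_const, nsmul_eq_mul, hN]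
    rw [step1]
    have step2 : ∀ t ∈ G ×ˢ G ×ˢ G ×ˢ G,
        (if lam * t.1 - t.2.1 - ξ * (t.2.2.1 - t.2.2.2) = 0 then (p : ℂ) else 0)
          = ∑ a : ZMod p, ψ (a * (lam * t.1 - t.2.1 - ξ * (t.2.2.1 - t.2.2.2))) :=
      fun t _ => (horth _).symm
    rw [Finset.sum_congr rfl step2, Finset.sum_comm]
    exact Finset.sum_congr rfl fun a _ => expand a
  -- split off a = 0
  have hsplit : (N : ℂ) * p - (G.card : ℂ) ^ 4
      = ∑ a ∈ Finset.univ.erase (0 : ZMod p),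
          S (a * lam) * S (-a) * (S (-(a * ξ)) * S (a * ξ)) := by
    rw [hkey, ← Finset.add_sum_erase _ _ (Finset.mem_univ (0 : ZMod p))]
    simp only [zero_mul, neg_zero, hS0]
    ring
  -- bound the error
  have hbound : ‖(N : ℂ) * p - (G.card : ℂ) ^ 4‖
      ≤ ((p : ℝ) - G.card) * ((p : ℝ) * G.card - (G.card : ℝ) ^ 2) := by
    rw [hsplit]
    refine (norm_sum_le _ _).trans ?_
    have hterm : ∀ a ∈ Finset.univ.erase (0 : ZMod p),
        ‖S (a * lam) * S (-a) * (S (-(a * ξ)) * S (a * ξ))‖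
          ≤ ((p : ℝ) - G.card) * ‖S (a * ξ)‖ ^ 2 := by
      intro a ha
      have ha0 : a ≠ 0 := (Finset.mem_erase.1 ha).1
      rw [norm_mul, norm_mul, norm_mul, hSnormneg, hSnormneg,
        show ‖S (a * ξ)‖ * ‖S (a * ξ)‖ = ‖S (a * ξ)‖ ^ 2 by ring]
      refine mul_le_mul_of_nonneg_right ?_ (sq_nonneg _)
      exact mul_le_of_sq_le_sq' (norm_nonneg _) (norm_nonneg _)
        (hmax _ (mul_ne_zero ha0 hlam)) (hmax _ ha0)
    have hinj : ∀ x ∈ Finset.univ.erase (0 : ZMod p), ∀ y ∈ Finset.univ.erase (0 : ZMod p),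
        x * ξ = y * ξ → x = y := fun x _ y _ h => mul_right_cancel₀ hξ h
    have himg3 : (Finset.univ.erase (0 : ZMod p)).image (fun a => a * ξ)
        = Finset.univ.erase (0 : ZMod p) := by
      apply Finset.eq_of_subset_of_card_le
      · intro x hx
        simp only [Finset.mem_image, Finset.mem_erase] at hx
        obtain ⟨a, ⟨ha, _⟩, rfl⟩ := hx
        exact Finset.mem_erase.2 ⟨mul_ne_zero ha hξ, Finset.mem_univ _⟩
      · rw [Finset.card_image_of_injOn hinj]
    calc ∑ a ∈ Finset.univ.erase (0 : ZMod p),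
          ‖S (a * lam) * S (-a) * (S (-(a * ξ)) * S (a * ξ))‖
        ≤ ∑ a ∈ Finset.univ.erase (0 : ZMod p), ((p : ℝ) - G.card) * ‖S (a * ξ)‖ ^ 2 :=
          Finset.sum_le_sum hterm
      _ = ((p : ℝ) - G.card) * ∑ a ∈ Finset.univ.erase (0 : ZMod p), ‖S (a * ξ)‖ ^ 2 := by
          rw [Finset.mul_sum]
      _ = ((p : ℝ) - G.card)
            * ∑ b ∈ (Finset.univ.erase (0 : ZMod p)).image (fun a => a * ξ), ‖S b‖ ^ 2 := by
          rw [Finset.sum_image hinj]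
      _ = ((p : ℝ) - G.card) * ∑ b ∈ Finset.univ.erase (0 : ZMod p), ‖S b‖ ^ 2 := by
          rw [himg3]
      _ = ((p : ℝ) - G.card) * ((p : ℝ) * G.card - (G.card : ℝ) ^ 2) := by rw [htot]
  -- pass to the reals
  have hreal : |(N : ℝ) * p - (G.card : ℝ) ^ 4|
      ≤ ((p : ℝ) - G.card) * ((p : ℝ) * G.card - (G.card : ℝ) ^ 2) := by
    have hcast : (((N : ℝ) * p - (G.card : ℝ) ^ 4 : ℝ) : ℂ)
        = (N : ℂ) * p - (G.card : ℂ) ^ 4 := by push_cast; ring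
    calc |(N : ℝ) * p - (G.card : ℝ) ^ 4|
        = ‖(((N : ℝ) * p - (G.card : ℝ) ^ 4 : ℝ) : ℂ)‖ := by
          rw [Complex.norm_real, Real.norm_eq_abs]
      _ = ‖(N : ℂ) * p - (G.card : ℂ) ^ 4‖ := by rw [hcast]
      _ ≤ _ := hbound
  -- conclude
  have hrw : (N : ℝ) - (G.card : ℝ) ^ 4 / p = ((N : ℝ) * p - (G.card : ℝ) ^ 4) / p := by
    field_simp
  rw [hrw, abs_div, abs_of_pos hppos, div_lt_iff₀ hppos]
  have hpg : (0 : ℝ) < (p : ℝ) * G.card - (G.card : ℝ) ^ 2 := by nlinarith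
  nlinarith [mul_pos hpg hgposR]
end

section
/- Let G ≤ F_p^* be a multiplicative subgroup, λ ∈ F_p^*, Δ ≥ 3 a real parameter. Then T_λ(G) − |G|^6/p ≪ |G|^4 + Δ|G|^2 p + W, where W = Σ over (a,b) ∈ F_p^2 with ι_G(ℓ_{a,b}) > Δ of ι_G(ℓ_{a,b})·(ι_G(ℓ_{a,λb}) − |G|^2/p)^2, and ι_G(ℓ_{a,b}) = |{(x,y) ∈ G×G : y = ax+b}|. -/
open Finset

set_option linter.unusedSectionVars false
set_option linter.unusedVariables false
set_option maxHeartbeats 4000000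

section CollinearAux
variable {p : ℕ} [hp : Fact p.Prime]

/-- Point count of `G × G` on the line `y = a x + b`. -/
def ioG (G : Finset (ZMod p)) (a b : ZMod p) : ℕ :=
  ((G ×ˢ G).filter (fun xy => xy.2 = a * xy.1 + b)).card

lemma grp_inv_mem (G : Finset (ZMod p)) (h0 : (0:ZMod p) ∉ G) (h1 : (1:ZMod p) ∈ G)
    (hmul : ∀ x ∈ G, ∀ y ∈ G, x*y ∈ G) : ∀ x ∈ G, x⁻¹ ∈ G := by
  intro x hx
  have hxne : x ≠ 0 := fun h => h0 (h ▸ hx)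
  have himg : G.image (fun y => x*y) = G := by
    apply Finset.eq_of_subset_of_card_le
    · intro z hz
      simp only [Finset.mem_image] at hz
      obtain ⟨y, hy, rfl⟩ := hz
      exact hmul x hx y hy
    · rw [Finset.card_image_of_injective _ (mul_right_injective₀ hxne)]
  have : (1:ZMod p) ∈ G.image (fun y => x*y) := by rw [himg]; exact h1
  simp only [Finset.mem_image] at this
  obtain ⟨y, hy, hxy⟩ := this
  have : y = x⁻¹ := eq_inv_of_mul_eq_one_right hxy
  rwa [← this]

lemma ioG_card (G : Finset (ZMod p)) (a b : ZMod p) :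
    ioG G a b = ∑ xy ∈ G ×ˢ G, if xy.2 = a * xy.1 + b then 1 else 0 := by
  rw [ioG, Finset.card_filter]

lemma sum_ioG_inner (G : Finset (ZMod p)) (a : ZMod p) :
    ∑ b : ZMod p, ioG G a b = G.card ^ 2 := by
  simp only [ioG_card]
  rw [Finset.sum_comm]
  have : ∀ xy ∈ G ×ˢ G, (∑ b : ZMod p, if xy.2 = a * xy.1 + b then 1 else 0) = 1 := by
    intro xy _
    have : ∀ b : ZMod p, (xy.2 = a * xy.1 + b) ↔ (b = xy.2 - a * xy.1) := by
      intro b; constructor <;> intro h <;> rw [h] <;> ring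
    simp only [this]
    rw [Finset.sum_ite_eq' Finset.univ (xy.2 - a*xy.1) (fun _ => 1), if_pos (Finset.mem_univ _)]
  rw [Finset.sum_congr rfl this, Finset.sum_const, Finset.card_product, smul_eq_mul, mul_one, sq]

lemma lin_count (d c : ZMod p) :
    (∑ a : ZMod p, if a * d = c then (1:ℕ) else 0)
      = if d = 0 then (if c = 0 then p else 0) else 1 := by
  rcases eq_or_ne d 0 with hd | hd
  · subst hd
    simp only [mul_zero, if_pos]
    rcases eq_or_ne c 0 with hc | hc
    · simp only [hc, if_pos rfl, eq_comm (a := (0:ZMod p))]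
      simp [Finset.sum_const, Finset.card_univ, ZMod.card]
    · simp [hc, (Ne.symm hc)]
  · rw [if_neg hd]
    have : ∀ a : ZMod p, (a * d = c) ↔ (a = c * d⁻¹) := by
      intro a; constructor
      · intro h; field_simp [hd]; exact h
      · intro h; rw [h]; field_simp [hd]
    simp only [this]
    rw [Finset.sum_ite_eq' Finset.univ (c * d⁻¹) (fun _ => 1), if_pos (Finset.mem_univ _)]

lemma pair_count (q q' : ZMod p × ZMod p) :
    (∑ a : ZMod p, ∑ b : ZMod p,
      ((if q.2 = a*q.1 + b then 1 else 0) * (if q'.2 = a*q'.1 + b then 1 else 0) : ℕ))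
    = if q'.1 = q.1 then (if q'.2 = q.2 then p else 0) else 1 := by
  have step1 : ∀ a : ZMod p, (∑ b : ZMod p,
      ((if q.2 = a*q.1 + b then 1 else 0) * (if q'.2 = a*q'.1 + b then 1 else 0) : ℕ))
      = if a * (q'.1 - q.1) = q'.2 - q.2 then 1 else 0 := by
    intro a
    have e1 : ∀ b : ZMod p,
        ((if q.2 = a*q.1 + b then 1 else 0) * (if q'.2 = a*q'.1 + b then 1 else 0) : ℕ)
        = if b = q.2 - a*q.1 then (if q'.2 = a*q'.1 + b then 1 else 0) else 0 := by
      intro b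
      have hb : (q.2 = a*q.1 + b) ↔ (b = q.2 - a*q.1) := by
        constructor <;> intro h <;> rw [h] <;> ring
      rcases eq_or_ne b (q.2 - a*q.1) with h | h
      · rw [if_pos h, if_pos (hb.mpr h), one_mul]
      · rw [if_neg h, if_neg (fun hh => h (hb.mp hh)), zero_mul]
    rw [Finset.sum_congr rfl (fun b _ => e1 b),
      Finset.sum_ite_eq' Finset.univ (q.2 - a*q.1) _, if_pos (Finset.mem_univ _)]
    congr 1
    rw [eq_iff_iff]
    constructor <;> intro h <;> linear_combination -h
  rw [Finset.sum_congr rfl (fun a _ => step1 a), lin_count (q'.1 - q.1) (q'.2 - q.2)]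
  congr 1
  · rw [eq_iff_iff]; exact sub_eq_zero
  · congr 1
    rw [eq_iff_iff]; exact sub_eq_zero

lemma sum_ioG_sq (G : Finset (ZMod p)) :
    (∑ a : ZMod p, ∑ b : ZMod p, (ioG G a b)^2) + G.card^3 = G.card^4 + p * G.card^2 := by
  classical
  have h1 : ∀ a b : ZMod p, (ioG G a b)^2
      = ∑ q ∈ G ×ˢ G, ∑ q' ∈ G ×ˢ G,
          ((if q.2 = a*q.1 + b then 1 else 0) * (if q'.2 = a*q'.1 + b then 1 else 0) : ℕ) := by
    intro a b
    rw [sq, ioG_card, Finset.sum_mul_sum]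
  have h2 : (∑ a : ZMod p, ∑ b : ZMod p, (ioG G a b)^2)
      = ∑ q ∈ G ×ˢ G, ∑ q' ∈ G ×ˢ G,
          (if q'.1 = q.1 then (if q'.2 = q.2 then p else 0) else 1) := by
    simp only [h1]
    calc (∑ a : ZMod p, ∑ b : ZMod p, ∑ q ∈ G ×ˢ G, ∑ q' ∈ G ×ˢ G,
            ((if q.2 = a*q.1 + b then 1 else 0) * (if q'.2 = a*q'.1 + b then 1 else 0) : ℕ))
        = ∑ a : ZMod p, ∑ q ∈ G ×ˢ G, ∑ b : ZMod p, ∑ q' ∈ G ×ˢ G,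
            ((if q.2 = a*q.1 + b then 1 else 0) * (if q'.2 = a*q'.1 + b then 1 else 0) : ℕ) :=
          Finset.sum_congr rfl (fun a _ => Finset.sum_comm)
      _ = ∑ a : ZMod p, ∑ q ∈ G ×ˢ G, ∑ q' ∈ G ×ˢ G, ∑ b : ZMod p,
            ((if q.2 = a*q.1 + b then 1 else 0) * (if q'.2 = a*q'.1 + b then 1 else 0) : ℕ) :=
          Finset.sum_congr rfl (fun a _ => Finset.sum_congr rfl (fun q _ => Finset.sum_comm))
      _ = ∑ q ∈ G ×ˢ G, ∑ a : ZMod p, ∑ q' ∈ G ×ˢ G, ∑ b : ZMod p,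
            ((if q.2 = a*q.1 + b then 1 else 0) * (if q'.2 = a*q'.1 + b then 1 else 0) : ℕ) :=
          Finset.sum_comm
      _ = ∑ q ∈ G ×ˢ G, ∑ q' ∈ G ×ˢ G, ∑ a : ZMod p, ∑ b : ZMod p,
            ((if q.2 = a*q.1 + b then 1 else 0) * (if q'.2 = a*q'.1 + b then 1 else 0) : ℕ) :=
          Finset.sum_congr rfl (fun q _ => Finset.sum_comm)
      _ = ∑ q ∈ G ×ˢ G, ∑ q' ∈ G ×ˢ G,
            (if q'.1 = q.1 then (if q'.2 = q.2 then p else 0) else 1) :=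
          Finset.sum_congr rfl (fun q _ => Finset.sum_congr rfl (fun q' _ => pair_count q q'))
  rw [h2]
  have inner : ∀ q ∈ G ×ˢ G, (∑ q' ∈ G ×ˢ G,
      (if q'.1 = q.1 then (if q'.2 = q.2 then p else 0) else 1))
      = p + ((G ×ˢ G).filter (fun q' => ¬ q'.1 = q.1)).card := by
    intro q hq
    rw [← Finset.sum_filter_add_sum_filter_not (G ×ˢ G) (fun q' => q'.1 = q.1)]
    congr 1
    · rw [Finset.sum_filter]
      have e : ∀ q' : ZMod p × ZMod p,
          (if q'.1 = q.1 then (if q'.1 = q.1 then (if q'.2 = q.2 then p else 0) else 1) else 0)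
          = if q' = q then p else 0 := by
        intro q'
        by_cases h1 : q'.1 = q.1 <;> by_cases h2 : q'.2 = q.2 <;>
          simp [h1, h2, Prod.ext_iff]
      rw [Finset.sum_congr rfl (fun q' _ => e q'),
        Finset.sum_ite_eq' (G ×ˢ G) q (fun _ => p), if_pos hq]
    · have e2 : ∀ q' ∈ (G ×ˢ G).filter (fun x => ¬ x.1 = q.1),
          (if q'.1 = q.1 then (if q'.2 = q.2 then p else 0) else 1) = 1 :=
        fun q' hq' => if_neg (Finset.mem_filter.mp hq').2
      rw [Finset.sum_congr rfl e2, Finset.sum_const, smul_eq_mul, mul_one]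
  rw [Finset.sum_congr rfl inner, Finset.sum_add_distrib, Finset.sum_const, smul_eq_mul,
    Finset.card_product]
  have cardsplit : ∀ q ∈ G ×ˢ G,
      ((G ×ˢ G).filter (fun q' => ¬ q'.1 = q.1)).card + G.card = G.card^2 := by
    intro q hq
    have := Finset.card_filter_add_card_filter_not
      (s := G ×ˢ G) (p := fun q' => q'.1 = q.1)
    have hc : ((G ×ˢ G).filter (fun q' => q'.1 = q.1)).card = G.card := by
      rw [Finset.filter_product_left (fun x => x = q.1), Finset.card_product,
        Finset.filter_eq' G q.1, if_pos (Finset.mem_product.mp hq).1]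
      simp
    rw [Finset.card_product, ← sq] at this
    omega
  have hsum2 : (∑ q ∈ G ×ˢ G, ((G ×ˢ G).filter (fun q' => ¬ q'.1 = q.1)).card) + G.card^3
      = G.card^4 := by
    have : (∑ q ∈ G ×ˢ G, (((G ×ˢ G).filter (fun q' => ¬ q'.1 = q.1)).card + G.card))
        = ∑ q ∈ G ×ˢ G, G.card^2 := Finset.sum_congr rfl cardsplit
    rw [Finset.sum_add_distrib, Finset.sum_const, Finset.sum_const, Finset.card_product,
      smul_eq_mul, smul_eq_mul] at this
    have e3 : G.card * G.card * G.card = G.card^3 := by ring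
    have e4 : G.card * G.card * G.card^2 = G.card^4 := by ring
    omega
  have e5 : G.card * G.card * p = p * G.card^2 := by ring
  omega

lemma ioG_zero (G : Finset (ZMod p)) (h0 : (0:ZMod p) ∉ G) (h1 : (1:ZMod p) ∈ G)
    (hmul : ∀ x ∈ G, ∀ y ∈ G, x*y ∈ G) (a : ZMod p) :
    ioG G a 0 = if a ∈ G then G.card else 0 := by
  by_cases ha : a ∈ G
  · rw [if_pos ha, ioG]
    apply Finset.card_bij' (fun xy _ => xy.1) (fun x hx => ((x, a*x) : ZMod p × ZMod p))
    · intro xy hxy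
      exact (Finset.mem_product.mp (Finset.mem_filter.mp hxy).1).1
    · intro x hx
      refine Finset.mem_filter.mpr ⟨Finset.mem_product.mpr ⟨hx, hmul a ha x hx⟩, by ring⟩
    · intro xy hxy
      have h2 := (Finset.mem_filter.mp hxy).2
      rw [add_zero] at h2
      exact Prod.ext rfl h2.symm
    · intro x hx; rfl
  · rw [if_neg ha, ioG, Finset.card_eq_zero, Finset.filter_eq_empty_iff]
    intro xy hxy
    obtain ⟨hx, hy⟩ := Finset.mem_product.mp hxy
    intro heq
    have hxne : xy.1 ≠ 0 := fun h => h0 (h ▸ hx)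
    have : a = xy.2 * xy.1⁻¹ := by
      rw [heq]; field_simp; ring
    exact ha (this ▸ hmul xy.2 hy xy.1⁻¹ (grp_inv_mem G h0 h1 hmul xy.1 hx))

/-- The sextuple set of the theorem. -/
def Sfin (G : Finset (ZMod p)) (lam : ZMod p) :
    Finset ((ZMod p × ZMod p × ZMod p) × (ZMod p × ZMod p × ZMod p)) :=
  ((G ×ˢ G ×ˢ G) ×ˢ (G ×ˢ G ×ˢ G)).filter (fun t =>
    t.1.1 - t.1.2.2 ≠ 0 ∧ t.2.1 - lam * t.2.2.2 ≠ 0 ∧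
    (t.1.1 - t.1.2.1) / (t.1.1 - t.1.2.2)
      = (t.2.1 - lam * t.2.2.1) / (t.2.1 - lam * t.2.2.2))

def keyf (lam : ZMod p) (t : (ZMod p × ZMod p × ZMod p) × (ZMod p × ZMod p × ZMod p)) :
    ZMod p × ZMod p :=
  (t.1.2.2 - lam * ((t.1.1 - t.1.2.2) / (t.2.1 - lam * t.2.2.2)) * t.2.2.2,
   (t.1.1 - t.1.2.2) / (t.2.1 - lam * t.2.2.2))

def Qset (G : Finset (ZMod p)) (lam a b : ZMod p) :
    Finset ((ZMod p × ZMod p) × (ZMod p × ZMod p) × (ZMod p × ZMod p)) :=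
  ((G ×ˢ G) ×ˢ (G ×ˢ G) ×ˢ (G ×ˢ G)).filter (fun q =>
    q.2.2.1 ≠ lam * q.1.1 ∧ q.1.2 = a * q.1.1 + b ∧
    q.2.1.2 = a * q.2.1.1 + lam * b ∧ q.2.2.2 = a * q.2.2.1 + lam * b)

def Mset (G : Finset (ZMod p)) (lam a b : ZMod p) :
    Finset ((ZMod p × ZMod p) × (ZMod p × ZMod p) × (ZMod p × ZMod p)) :=
  ((G ×ˢ G) ×ˢ (G ×ˢ G) ×ˢ (G ×ˢ G)).filter (fun q =>
    q.2.2.1 = lam * q.1.1 ∧ q.1.2 = a * q.1.1 + b ∧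
    q.2.1.2 = a * q.2.1.1 + lam * b ∧ q.2.2.2 = a * q.2.2.1 + lam * b)

lemma fiber_zero (G : Finset (ZMod p)) (lam : ZMod p) (a : ZMod p) :
    (Sfin G lam).filter (fun t => keyf lam t = (a, (0:ZMod p))) = ∅ := by
  rw [Finset.filter_eq_empty_iff]
  intro t ht
  obtain ⟨-, d1, d2, -⟩ := Finset.mem_filter.mp ht
  intro hkey
  have : (t.1.1 - t.1.2.2) / (t.2.1 - lam * t.2.2.2) = 0 := congrArg Prod.snd hkey
  exact (div_ne_zero d1 d2) this

lemma fiber_card (G : Finset (ZMod p)) (h0 : (0:ZMod p) ∉ G) (h1 : (1:ZMod p) ∈ G)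
    (hmul : ∀ x ∈ G, ∀ y ∈ G, x*y ∈ G) (lam : ZMod p) (hlam : lam ≠ 0)
    (a b : ZMod p) (hb : b ≠ 0) :
    ((Sfin G lam).filter (fun t => keyf lam t = (a, b))).card = (Qset G lam a b).card := by
  have hinv := grp_inv_mem G h0 h1 hmul
  have hne : ∀ x ∈ G, x ≠ 0 := fun x hx h => h0 (h ▸ hx)
  refine Finset.card_bij'
    (fun t _ => ((t.2.1⁻¹, t.1.1 * t.2.1⁻¹),
      ((t.2.2.1⁻¹, t.1.2.1 * t.2.2.1⁻¹), (t.2.2.2⁻¹, t.1.2.2 * t.2.2.2⁻¹))))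
    (fun q _ => ((q.1.2 * q.1.1⁻¹, (q.2.1.2 * q.2.1.1⁻¹, q.2.2.2 * q.2.2.1⁻¹)),
      (q.1.1⁻¹, (q.2.1.1⁻¹, q.2.2.1⁻¹)))) ?_ ?_ ?_ ?_
  · rintro ⟨⟨u₁, v₁, w₁⟩, ⟨u₂, v₂, w₂⟩⟩ ht
    rw [Finset.mem_filter, Sfin, Finset.mem_filter, Finset.mem_product] at ht
    obtain ⟨⟨hmem, d1, d2, heq⟩, hkey⟩ := ht
    simp only [Finset.mem_product] at hmem
    obtain ⟨⟨hu₁, hv₁, hw₁⟩, hu₂, hv₂, hw₂⟩ := hmem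
    simp only [keyf, Prod.mk.injEq] at hkey d1 d2 heq
    obtain ⟨hadef, hbdef⟩ := hkey
    rw [hbdef] at hadef
    have hu₂0 := hne _ hu₂; have hv₂0 := hne _ hv₂; have hw₂0 := hne _ hw₂
    have hb' : b * (u₂ - lam * w₂) = u₁ - w₁ := by
      rw [← hbdef]; exact div_mul_cancel₀ _ d2
    have crossEq : (u₁ - v₁) * (u₂ - lam * w₂) = (u₂ - lam * v₂) * (u₁ - w₁) :=
      (div_eq_div_iff d1 d2).mp heq
    have key1 : u₁ = a + b * u₂ := by linear_combination hadef - hb'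
    have key3 : w₁ = a + lam * b * w₂ := by linear_combination hadef
    have key2 : v₁ = a + lam * b * v₂ := by
      have h2 : v₁ * (u₂ - lam * w₂) = (a + lam * b * v₂) * (u₂ - lam * w₂) := by
        linear_combination (u₂ - lam*w₂) * hadef + (lam*w₂ - lam*v₂) * hb' - crossEq
      exact mul_right_cancel₀ d2 h2
    simp only [Qset, Finset.mem_filter, Finset.mem_product]
    refine ⟨⟨⟨hinv _ hu₂, hmul _ hu₁ _ (hinv _ hu₂)⟩,
        ⟨hinv _ hv₂, hmul _ hv₁ _ (hinv _ hv₂)⟩,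
        ⟨hinv _ hw₂, hmul _ hw₁ _ (hinv _ hw₂)⟩⟩, ?_, ?_, ?_, ?_⟩
    · intro h
      apply d2
      have h2 : u₂ = lam * w₂ := by
        field_simp at h
        linear_combination h
      rw [h2]; ring
    · rw [key1]; field_simp
    · rw [key2]; field_simp
    · rw [key3]; field_simp
  · rintro ⟨⟨x₀, y₀⟩, ⟨x₁, y₁⟩, ⟨x₂, y₂⟩⟩ hq
    rw [Qset, Finset.mem_filter, Finset.mem_product] at hq
    obtain ⟨hmem, hx₂l, l0, l1, l2⟩ := hq
    simp only [Finset.mem_product] at hmem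
    obtain ⟨⟨hx₀, hy₀⟩, ⟨hx₁, hy₁⟩, hx₂, hy₂⟩ := hmem
    simp only at hx₂l l0 l1 l2
    have hx₀0 := hne _ hx₀; have hx₁0 := hne _ hx₁; have hx₂0 := hne _ hx₂
    have hd2 : x₀⁻¹ - lam * x₂⁻¹ ≠ 0 := by
      have e2 : x₀⁻¹ - lam * x₂⁻¹ = (x₂ - lam * x₀) * (x₀⁻¹ * x₂⁻¹) := by
        field_simp
      rw [e2]
      exact mul_ne_zero (sub_ne_zero.mpr hx₂l)
        (mul_ne_zero (inv_ne_zero hx₀0) (inv_ne_zero hx₂0))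
    have hd1eq : y₀ * x₀⁻¹ - y₂ * x₂⁻¹ = b * (x₀⁻¹ - lam * x₂⁻¹) := by
      rw [l0, l2]; field_simp; ring
    have hnum : y₀ * x₀⁻¹ - y₁ * x₁⁻¹ = b * (x₀⁻¹ - lam * x₁⁻¹) := by
      rw [l0, l1]; field_simp; ring
    rw [Finset.mem_filter, Sfin, Finset.mem_filter, Finset.mem_product]
    refine ⟨⟨?_, ?_, ?_, ?_⟩, ?_⟩
    · simp only [Finset.mem_product]
      exact ⟨⟨hmul _ hy₀ _ (hinv _ hx₀), hmul _ hy₁ _ (hinv _ hx₁),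
        hmul _ hy₂ _ (hinv _ hx₂)⟩, hinv _ hx₀, hinv _ hx₁, hinv _ hx₂⟩
    · simp only
      rw [hd1eq]; exact mul_ne_zero hb hd2
    · simp only; exact hd2
    · simp only
      rw [hnum, hd1eq, mul_div_mul_left _ _ hb]
    · simp only [keyf, Prod.mk.injEq]
      constructor
      · rw [hd1eq, mul_div_assoc, div_self hd2, mul_one, l2]
        field_simp; ring
      · rw [hd1eq, mul_div_assoc, div_self hd2, mul_one]
  · rintro ⟨⟨u₁, v₁, w₁⟩, ⟨u₂, v₂, w₂⟩⟩ ht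
    rw [Finset.mem_filter, Sfin, Finset.mem_filter, Finset.mem_product] at ht
    obtain ⟨⟨hmem, -, -, -⟩, -⟩ := ht
    simp only [Finset.mem_product] at hmem
    obtain ⟨⟨hu₁, hv₁, hw₁⟩, hu₂, hv₂, hw₂⟩ := hmem
    have hu₂0 := hne _ hu₂; have hv₂0 := hne _ hv₂; have hw₂0 := hne _ hw₂
    simp only [Prod.mk.injEq]
    refine ⟨⟨?_, ?_, ?_⟩, ?_, ?_, ?_⟩ <;> field_simp
  · rintro ⟨⟨x₀, y₀⟩, ⟨x₁, y₁⟩, ⟨x₂, y₂⟩⟩ hq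
    rw [Qset, Finset.mem_filter, Finset.mem_product] at hq
    obtain ⟨hmem, -⟩ := hq
    simp only [Finset.mem_product] at hmem
    obtain ⟨⟨hx₀, hy₀⟩, ⟨hx₁, hy₁⟩, hx₂, hy₂⟩ := hmem
    have hx₀0 := hne _ hx₀; have hx₁0 := hne _ hx₁; have hx₂0 := hne _ hx₂
    simp only [Prod.mk.injEq]
    refine ⟨⟨?_, ?_⟩, ⟨?_, ?_⟩, ?_, ?_⟩ <;> field_simp

lemma card_S (G : Finset (ZMod p)) (h0 : (0:ZMod p) ∉ G) (h1 : (1:ZMod p) ∈ G)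
    (hmul : ∀ x ∈ G, ∀ y ∈ G, x*y ∈ G) (lam : ZMod p) (hlam : lam ≠ 0) :
    (Sfin G lam).card = ∑ a : ZMod p, ∑ b : ZMod p,
      (if b = 0 then 0 else (Qset G lam a b).card) := by
  rw [Finset.card_eq_sum_card_fiberwise
    (f := keyf lam) (t := (Finset.univ : Finset (ZMod p × ZMod p)))
    (fun t _ => Finset.mem_univ _)]
  rw [Fintype.sum_prod_type]
  refine Finset.sum_congr rfl (fun a _ => Finset.sum_congr rfl (fun b _ => ?_))
  rcases eq_or_ne b 0 with rfl | hb
  · rw [if_pos rfl, fiber_zero, Finset.card_empty]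
  · rw [if_neg hb, fiber_card G h0 h1 hmul lam hlam a b hb]

lemma Q_split (G : Finset (ZMod p)) (lam a b : ZMod p) :
    (Qset G lam a b).card + (Mset G lam a b).card
      = ioG G a b * (ioG G a (lam * b) * ioG G a (lam * b)) := by
  classical
  have base : (((G ×ˢ G) ×ˢ (G ×ˢ G) ×ˢ (G ×ˢ G)).filter (fun q =>
      q.1.2 = a * q.1.1 + b ∧ q.2.1.2 = a * q.2.1.1 + lam * b
        ∧ q.2.2.2 = a * q.2.2.1 + lam * b))
      = ((G ×ˢ G).filter (fun r => r.2 = a * r.1 + b)) ×ˢ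
        (((G ×ˢ G).filter (fun s => s.2 = a * s.1 + lam * b)) ×ˢ
         ((G ×ˢ G).filter (fun s => s.2 = a * s.1 + lam * b))) := by
    ext ⟨⟨r1, r2⟩, ⟨s1, s2⟩, ⟨t1, t2⟩⟩
    simp only [Finset.mem_filter, Finset.mem_product]
    tauto
  have basec : (((G ×ˢ G) ×ˢ (G ×ˢ G) ×ˢ (G ×ˢ G)).filter (fun q =>
      q.1.2 = a * q.1.1 + b ∧ q.2.1.2 = a * q.2.1.1 + lam * b
        ∧ q.2.2.2 = a * q.2.2.1 + lam * b)).card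
      = ioG G a b * (ioG G a (lam * b) * ioG G a (lam * b)) := by
    rw [base, Finset.card_product, Finset.card_product, ioG, ioG]
  rw [← basec]
  have e1 : Qset G lam a b = (((G ×ˢ G) ×ˢ (G ×ˢ G) ×ˢ (G ×ˢ G)).filter (fun q =>
      q.1.2 = a * q.1.1 + b ∧ q.2.1.2 = a * q.2.1.1 + lam * b
        ∧ q.2.2.2 = a * q.2.2.1 + lam * b)).filter (fun q => ¬ (q.2.2.1 = lam * q.1.1)) := by
    rw [Qset, Finset.filter_filter]
    apply Finset.filter_congr
    intro q _
    tauto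
  have e2 : Mset G lam a b = (((G ×ˢ G) ×ˢ (G ×ˢ G) ×ˢ (G ×ˢ G)).filter (fun q =>
      q.1.2 = a * q.1.1 + b ∧ q.2.1.2 = a * q.2.1.1 + lam * b
        ∧ q.2.2.2 = a * q.2.2.1 + lam * b)).filter (fun q => q.2.2.1 = lam * q.1.1) := by
    rw [Mset, Finset.filter_filter]
    apply Finset.filter_congr
    intro q _
    tauto
  rw [e1, e2, add_comm]
  exact Finset.card_filter_add_card_filter_not _

lemma M_le (G : Finset (ZMod p)) (lam a b : ZMod p) :
    (Mset G lam a b).card ≤ ioG G a b * ioG G a (lam * b) := by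
  classical
  rw [ioG, ioG, ← Finset.card_product]
  apply Finset.card_le_card_of_injOn (fun q => (q.1, q.2.1))
  · intro q hq
    rw [Mset, Finset.mem_coe, Finset.mem_filter, Finset.mem_product] at hq
    obtain ⟨⟨h1, h2⟩, heq, l0, l1, l2⟩ := hq
    rw [Finset.mem_product] at h2
    rw [Finset.mem_coe, Finset.mem_product, Finset.mem_filter, Finset.mem_filter]
    exact ⟨⟨h1, l0⟩, h2.1, l1⟩
  · intro q hq r hr hqr
    simp only [Mset, Finset.mem_coe, Finset.mem_filter] at hq hr
    obtain ⟨-, heq, -, -, l2⟩ := hq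
    obtain ⟨-, heq', -, -, l2'⟩ := hr
    simp only [Prod.mk.injEq] at hqr
    obtain ⟨h1, h2⟩ := hqr
    have h3 : q.2.2 = r.2.2 := by
      have hx : q.2.2.1 = r.2.2.1 := by rw [heq, heq', h1]
      have hy : q.2.2.2 = r.2.2.2 := by rw [l2, l2', hx]
      exact Prod.ext hx hy
    exact Prod.ext h1 (Prod.ext h2 h3)


/-- Deviation of the line count from its mean. -/
noncomputable def dv (G : Finset (ZMod p)) (a b : ZMod p) : ℝ :=
  ((ioG G a b : ℕ):ℝ) - (G.card:ℝ)^2/(p:ℝ)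

lemma hre_sum (lam : ZMod p) (hlam : lam ≠ 0) (g : ZMod p → ℝ) :
    ∑ b : ZMod p, g (lam * b) = ∑ b : ZMod p, g b :=
  Fintype.sum_equiv (Equiv.mulLeft₀ lam hlam) _ _ (fun b => rfl)

lemma hcard_univ : (Finset.univ : Finset (ZMod p)).card = p := by
  rw [Finset.card_univ, ZMod.card]

lemma hp_pos : (0:ℝ) < (p:ℝ) := by exact_mod_cast (Fact.out (p := p.Prime)).pos

lemma F1a (G : Finset (ZMod p)) (a : ZMod p) :
    ∑ b : ZMod p, ((ioG G a b : ℕ):ℝ) = (G.card:ℝ)^2 := by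
  exact_mod_cast sum_ioG_inner G a

lemma F1 (G : Finset (ZMod p)) :
    ∑ a : ZMod p, ∑ b : ZMod p, ((ioG G a b:ℕ):ℝ) = (p:ℝ) * (G.card:ℝ)^2 := by
  rw [Finset.sum_congr rfl (fun a _ => F1a G a), Finset.sum_const, hcard_univ, nsmul_eq_mul]

lemma F2 (G : Finset (ZMod p)) :
    ∑ a : ZMod p, ∑ b : ZMod p, (((ioG G a b:ℕ):ℝ))^2
      = (G.card:ℝ)^4 + (p:ℝ)*(G.card:ℝ)^2 - (G.card:ℝ)^3 := by
  have h' : (∑ a : ZMod p, ∑ b : ZMod p, (((ioG G a b:ℕ):ℝ))^2) + (G.card:ℝ)^3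
      = (G.card:ℝ)^4 + (p:ℝ)*(G.card:ℝ)^2 := by
    exact_mod_cast sum_ioG_sq (G := G)
  linarith

lemma L_D1 (G : Finset (ZMod p)) :
    ∑ a : ZMod p, ∑ b : ZMod p, dv G a b = 0 := by
  have hpne : (p:ℝ) ≠ 0 := ne_of_gt hp_pos
  have h1 : ∀ a : ZMod p, ∑ b : ZMod p, dv G a b
      = (G.card:ℝ)^2 - (p:ℝ)*((G.card:ℝ)^2/(p:ℝ)) := by
    intro a
    rw [show (fun b => dv G a b) = fun b => (((ioG G a b:ℕ):ℝ) - (G.card:ℝ)^2/(p:ℝ)) from rfl]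
    rw [Finset.sum_sub_distrib, F1a G a, Finset.sum_const, hcard_univ, nsmul_eq_mul]
  rw [Finset.sum_congr rfl (fun a _ => h1 a), Finset.sum_const, hcard_univ, nsmul_eq_mul]
  field_simp; ring

lemma L_D1e (G : Finset (ZMod p)) (lam : ZMod p) (hlam : lam ≠ 0) :
    ∑ a : ZMod p, ∑ b : ZMod p, dv G a (lam*b) = 0 := by
  rw [Finset.sum_congr rfl (fun a _ => hre_sum lam hlam (fun b => dv G a b))]
  exact L_D1 G

lemma L_D2 (G : Finset (ZMod p)) :
    ∑ a : ZMod p, ∑ b : ZMod p, (dv G a b)^2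
      = (p:ℝ)*(G.card:ℝ)^2 - (G.card:ℝ)^3 := by
  have hpne : (p:ℝ) ≠ 0 := ne_of_gt hp_pos
  have expand : ∀ a : ZMod p, ∑ b : ZMod p, (dv G a b)^2
      = (∑ b : ZMod p, ((ioG G a b:ℕ):ℝ)^2)
        - 2*((G.card:ℝ)^2/(p:ℝ))*(∑ b : ZMod p, ((ioG G a b:ℕ):ℝ))
        + (p:ℝ)*((G.card:ℝ)^2/(p:ℝ))^2 := by
    intro a
    rw [show (fun b => (dv G a b)^2)
        = fun b => (((ioG G a b:ℕ):ℝ)^2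
          - 2*((G.card:ℝ)^2/(p:ℝ))*((ioG G a b:ℕ):ℝ) + ((G.card:ℝ)^2/(p:ℝ))^2) from
      funext (fun b => by rw [dv]; ring)]
    rw [Finset.sum_add_distrib, Finset.sum_sub_distrib, ← Finset.mul_sum,
      Finset.sum_const, hcard_univ, nsmul_eq_mul]
  rw [Finset.sum_congr rfl (fun a _ => expand a), Finset.sum_add_distrib,
    Finset.sum_sub_distrib, ← Finset.mul_sum, Finset.sum_const, hcard_univ, nsmul_eq_mul, F2]
  rw [F1 G]
  field_simp
  ring

lemma L_D2e (G : Finset (ZMod p)) (lam : ZMod p) (hlam : lam ≠ 0) :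
    ∑ a : ZMod p, ∑ b : ZMod p, (dv G a (lam*b))^2
      = (p:ℝ)*(G.card:ℝ)^2 - (G.card:ℝ)^3 := by
  rw [Finset.sum_congr rfl (fun a _ => hre_sum lam hlam (fun b => (dv G a b)^2))]
  exact L_D2 G

lemma L_F6 (G : Finset (ZMod p)) (h0 : (0:ZMod p) ∉ G) (h1 : (1:ZMod p) ∈ G)
    (hmul : ∀ x ∈ G, ∀ y ∈ G, x*y ∈ G) :
    ∑ a : ZMod p, ((ioG G a 0:ℕ):ℝ) * ((ioG G a 0:ℕ):ℝ)^2 = (G.card:ℝ)^4 := by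
  have e : ∀ a : ZMod p, ((ioG G a 0:ℕ):ℝ) * ((ioG G a 0:ℕ):ℝ)^2
      = if a ∈ G then (G.card:ℝ)^3 else 0 := by
    intro a
    rw [ioG_zero G h0 h1 hmul a]
    split
    · push_cast; ring
    · norm_num
  rw [Finset.sum_congr rfl (fun a _ => e a), Finset.sum_ite_mem, Finset.univ_inter,
    Finset.sum_const, nsmul_eq_mul]
  ring

lemma L_A (G : Finset (ZMod p)) (lam : ZMod p) (hlam : lam ≠ 0) :
    ∑ a : ZMod p, ∑ b : ZMod p,
      (((ioG G a b:ℕ):ℝ) * ((ioG G a (lam*b):ℕ):ℝ)^2)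
    = (p:ℝ)*((p:ℝ)*((G.card:ℝ)^2/(p:ℝ))^3)
      + ((G.card:ℝ)^2/(p:ℝ))*((p:ℝ)*(G.card:ℝ)^2 - (G.card:ℝ)^3)
      + 2*((G.card:ℝ)^2/(p:ℝ))*(∑ a : ZMod p, ∑ b : ZMod p, dv G a b * dv G a (lam*b))
      + ∑ a : ZMod p, ∑ b : ZMod p, dv G a b * (dv G a (lam*b))^2 := by
  have pt : ∀ a b : ZMod p, ((ioG G a b:ℕ):ℝ) * ((ioG G a (lam*b):ℕ):ℝ)^2
      = ((G.card:ℝ)^2/(p:ℝ))^3 + 2*((G.card:ℝ)^2/(p:ℝ))^2*(dv G a (lam*b))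
        + ((G.card:ℝ)^2/(p:ℝ))*(dv G a (lam*b))^2
        + ((G.card:ℝ)^2/(p:ℝ))^2*(dv G a b)
        + 2*((G.card:ℝ)^2/(p:ℝ))*(dv G a b * dv G a (lam*b))
        + dv G a b * (dv G a (lam*b))^2 := by
    intro a b; rw [dv, dv]; ring
  rw [Finset.sum_congr rfl (fun a _ => Finset.sum_congr rfl (fun b _ => pt a b))]
  simp only [Finset.sum_add_distrib, ← Finset.mul_sum]
  rw [L_D1 G, L_D1e G lam hlam, L_D2e G lam hlam, Finset.sum_const, Finset.sum_const,
    hcard_univ, nsmul_eq_mul, nsmul_eq_mul]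
  ring

lemma L_T (G : Finset (ZMod p)) (h0 : (0:ZMod p) ∉ G) (h1 : (1:ZMod p) ∈ G)
    (hmul : ∀ x ∈ G, ∀ y ∈ G, x*y ∈ G) (lam : ZMod p) (hlam : lam ≠ 0) :
    ((Sfin G lam).card : ℝ)
      = (∑ a : ZMod p, ∑ b : ZMod p,
          (((ioG G a b:ℕ):ℝ) * ((ioG G a (lam*b):ℕ):ℝ)^2)) - (G.card:ℝ)^4
        - ∑ a : ZMod p, ∑ b : ZMod p,
            (if b = (0:ZMod p) then 0 else ((Mset G lam a b).card : ℝ)) := by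
  have hcR : ((Sfin G lam).card:ℝ)
      = ∑ a : ZMod p, ∑ b : ZMod p,
          (if b = (0:ZMod p) then 0 else ((Qset G lam a b).card:ℝ)) := by
    exact_mod_cast card_S G h0 h1 hmul lam hlam
  have ptT : ∀ a b : ZMod p, (if b = (0:ZMod p) then 0 else ((Qset G lam a b).card:ℝ))
      = (((ioG G a b:ℕ):ℝ) * ((ioG G a (lam*b):ℕ):ℝ)^2)
        - (if b = (0:ZMod p) then (((ioG G a b:ℕ):ℝ) * ((ioG G a (lam*b):ℕ):ℝ)^2) else 0)
        - (if b = (0:ZMod p) then 0 else ((Mset G lam a b).card : ℝ)) := by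
    intro a b
    have hqs : ((Qset G lam a b).card:ℝ) + ((Mset G lam a b).card:ℝ)
        = ((ioG G a b:ℕ):ℝ) * (((ioG G a (lam*b):ℕ):ℝ) * ((ioG G a (lam*b):ℕ):ℝ)) := by
      exact_mod_cast Q_split G lam a b
    rcases eq_or_ne b 0 with rfl | hb
    · simp
    · rw [if_neg hb, if_neg hb, if_neg hb, sq]
      linarith
  rw [hcR, Finset.sum_congr rfl (fun a _ => Finset.sum_congr rfl (fun b _ => ptT a b))]
  simp only [Finset.sum_sub_distrib]
  have hY : ∑ a : ZMod p, ∑ b : ZMod p,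
      (if b = (0:ZMod p) then (((ioG G a b:ℕ):ℝ) * ((ioG G a (lam*b):ℕ):ℝ)^2) else 0)
      = (G.card:ℝ)^4 := by
    have hb0 : ∀ a : ZMod p, ∑ b : ZMod p,
        (if b = (0:ZMod p) then (((ioG G a b:ℕ):ℝ) * ((ioG G a (lam*b):ℕ):ℝ)^2) else 0)
        = ((ioG G a 0:ℕ):ℝ) * ((ioG G a 0:ℕ):ℝ)^2 := by
      intro a
      rw [Finset.sum_ite_eq' Finset.univ (0:ZMod p)
        (fun b => (((ioG G a b:ℕ):ℝ) * ((ioG G a (lam*b):ℕ):ℝ)^2)),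
        if_pos (Finset.mem_univ _), mul_zero]
    rw [Finset.sum_congr rfl (fun a _ => hb0 a), L_F6 G h0 h1 hmul]
  rw [hY]

lemma L_DEb (G : Finset (ZMod p)) (lam : ZMod p) (hlam : lam ≠ 0) :
    |∑ a : ZMod p, ∑ b : ZMod p, dv G a b * dv G a (lam*b)|
      ≤ (p:ℝ)*(G.card:ℝ)^2 - (G.card:ℝ)^3 := by
  have step1 : |∑ a : ZMod p, ∑ b : ZMod p, dv G a b * dv G a (lam*b)|
      ≤ ∑ a : ZMod p, ∑ b : ZMod p, ((dv G a b)^2/2 + (dv G a (lam*b))^2/2) := by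
    refine (Finset.abs_sum_le_sum_abs _ _).trans ?_
    apply Finset.sum_le_sum; intro a _
    refine (Finset.abs_sum_le_sum_abs _ _).trans ?_
    apply Finset.sum_le_sum; intro b _
    rw [abs_mul]
    nlinarith [sq_nonneg (|dv G a b| - |dv G a (lam*b)|),
      sq_abs (dv G a b), sq_abs (dv G a (lam*b)),
      abs_nonneg (dv G a b), abs_nonneg (dv G a (lam*b))]
  have step2 : ∑ a : ZMod p, ∑ b : ZMod p, ((dv G a b)^2/2 + (dv G a (lam*b))^2/2)
      = (p:ℝ)*(G.card:ℝ)^2 - (G.card:ℝ)^3 := by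
    simp only [Finset.sum_add_distrib, ← Finset.sum_div]
    rw [L_D2 G, L_D2e G lam hlam]
    ring
  linarith

lemma L_DE2b (G : Finset (ZMod p)) (lam : ZMod p) (hlam : lam ≠ 0) (Δ : ℝ) (hΔ : 3 ≤ Δ) :
    |∑ a : ZMod p, ∑ b : ZMod p, dv G a b * (dv G a (lam*b))^2|
      ≤ (Δ + (G.card:ℝ)^2/(p:ℝ))*((p:ℝ)*(G.card:ℝ)^2 - (G.card:ℝ)^3)
        + ∑ a : ZMod p, ∑ b : ZMod p,
            (if Δ < ((ioG G a b:ℕ):ℝ) then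
              (((ioG G a b:ℕ):ℝ) * (dv G a (lam*b))^2) else 0) := by
  have hmu0 : (0:ℝ) ≤ (G.card:ℝ)^2/(p:ℝ) := by positivity
  have step1 : |∑ a : ZMod p, ∑ b : ZMod p, dv G a b * (dv G a (lam*b))^2|
      ≤ ∑ a : ZMod p, ∑ b : ZMod p,
          ((Δ + (G.card:ℝ)^2/(p:ℝ))*(dv G a (lam*b))^2 +
            (if Δ < ((ioG G a b:ℕ):ℝ) then
              (((ioG G a b:ℕ):ℝ) * (dv G a (lam*b))^2) else 0)) := by
    refine (Finset.abs_sum_le_sum_abs _ _).trans ?_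
    apply Finset.sum_le_sum; intro a _
    refine (Finset.abs_sum_le_sum_abs _ _).trans ?_
    apply Finset.sum_le_sum; intro b _
    have hio0 : (0:ℝ) ≤ ((ioG G a b:ℕ):ℝ) := Nat.cast_nonneg _
    have hsq : (0:ℝ) ≤ (dv G a (lam*b))^2 := sq_nonneg _
    rw [abs_mul, abs_of_nonneg hsq]
    have hdv : dv G a b = ((ioG G a b:ℕ):ℝ) - (G.card:ℝ)^2/(p:ℝ) := rfl
    rcases le_or_gt ((ioG G a b:ℕ):ℝ) Δ with hle | hgt
    · rw [if_neg (not_lt.mpr hle), add_zero]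
      apply mul_le_mul_of_nonneg_right _ hsq
      rw [hdv, abs_le]
      constructor
      · linarith
      · linarith
    · rw [if_pos hgt]
      have habs : |dv G a b| ≤ (Δ + (G.card:ℝ)^2/(p:ℝ)) + ((ioG G a b:ℕ):ℝ) := by
        rw [hdv, abs_le]
        constructor
        · linarith
        · linarith
      nlinarith [mul_le_mul_of_nonneg_right habs hsq]
  have step2 : ∑ a : ZMod p, ∑ b : ZMod p,
      ((Δ + (G.card:ℝ)^2/(p:ℝ))*(dv G a (lam*b))^2 +
        (if Δ < ((ioG G a b:ℕ):ℝ) then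
          (((ioG G a b:ℕ):ℝ) * (dv G a (lam*b))^2) else 0))
      = (Δ + (G.card:ℝ)^2/(p:ℝ))*((p:ℝ)*(G.card:ℝ)^2 - (G.card:ℝ)^3)
        + ∑ a : ZMod p, ∑ b : ZMod p,
            (if Δ < ((ioG G a b:ℕ):ℝ) then
              (((ioG G a b:ℕ):ℝ) * (dv G a (lam*b))^2) else 0) := by
    simp only [Finset.sum_add_distrib, ← Finset.mul_sum]
    rw [L_D2e G lam hlam]
  linarith

lemma L_SMb (G : Finset (ZMod p)) (lam : ZMod p) (hlam : lam ≠ 0) :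
    ∑ a : ZMod p, ∑ b : ZMod p,
        (if b = (0:ZMod p) then 0 else ((Mset G lam a b).card : ℝ))
      ≤ (G.card:ℝ)^4 + (p:ℝ)*(G.card:ℝ)^2 := by
  have pt1 : ∀ a b : ZMod p, (if b = (0:ZMod p) then 0 else ((Mset G lam a b).card : ℝ))
      ≤ ((ioG G a b:ℕ):ℝ) * ((ioG G a (lam*b):ℕ):ℝ) := by
    intro a b
    have hMle : ((Mset G lam a b).card : ℝ)
        ≤ ((ioG G a b:ℕ):ℝ) * ((ioG G a (lam*b):ℕ):ℝ) := by
      exact_mod_cast M_le G lam a b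
    split
    · exact mul_nonneg (Nat.cast_nonneg _) (Nat.cast_nonneg _)
    · exact hMle
  have pt2 : ∀ a b : ZMod p, ((ioG G a b:ℕ):ℝ) * ((ioG G a (lam*b):ℕ):ℝ)
      ≤ ((ioG G a b:ℕ):ℝ)^2/2 + ((ioG G a (lam*b):ℕ):ℝ)^2/2 := by
    intro a b
    nlinarith [sq_nonneg (((ioG G a b:ℕ):ℝ) - ((ioG G a (lam*b):ℕ):ℝ))]
  have F5 : ∑ a : ZMod p, ∑ b : ZMod p, (((ioG G a (lam*b):ℕ):ℝ))^2
      = (G.card:ℝ)^4 + (p:ℝ)*(G.card:ℝ)^2 - (G.card:ℝ)^3 := by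
    rw [Finset.sum_congr rfl
      (fun a _ => hre_sum lam hlam (fun b => (((ioG G a b:ℕ):ℝ))^2))]
    exact F2 G
  have step : ∑ a : ZMod p, ∑ b : ZMod p,
      (if b = (0:ZMod p) then 0 else ((Mset G lam a b).card : ℝ))
      ≤ ∑ a : ZMod p, ∑ b : ZMod p,
        (((ioG G a b:ℕ):ℝ)^2/2 + ((ioG G a (lam*b):ℕ):ℝ)^2/2) := by
    apply Finset.sum_le_sum; intro a _
    apply Finset.sum_le_sum; intro b _
    exact (pt1 a b).trans (pt2 a b)
  have eval : ∑ a : ZMod p, ∑ b : ZMod p,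
      (((ioG G a b:ℕ):ℝ)^2/2 + ((ioG G a (lam*b):ℕ):ℝ)^2/2)
      = (G.card:ℝ)^4 + (p:ℝ)*(G.card:ℝ)^2 - (G.card:ℝ)^3 := by
    simp only [Finset.sum_add_distrib, ← Finset.sum_div]
    rw [F2 G, F5]
    ring
  have hn3 : (0:ℝ) ≤ (G.card:ℝ)^3 := by positivity
  linarith

lemma final_est (G : Finset (ZMod p)) (h0 : (0:ZMod p) ∉ G) (h1 : (1:ZMod p) ∈ G)
    (hmul : ∀ x ∈ G, ∀ y ∈ G, x*y ∈ G) (lam : ZMod p) (hlam : lam ≠ 0)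
    (Δ : ℝ) (hΔ : 3 ≤ Δ) :
    |((Sfin G lam).card : ℝ) - (G.card : ℝ)^6 / (p : ℝ)|
      ≤ 100 * ((G.card : ℝ)^4 + Δ * (G.card : ℝ)^2 * (p : ℝ)
          + ∑ a : ZMod p, ∑ b : ZMod p,
            (if Δ < ((ioG G a b : ℕ) : ℝ) then
              (((ioG G a b : ℕ) : ℝ) * (dv G a (lam * b))^2)
            else 0)) := by
  have hp0 : (0:ℝ) < (p:ℝ) := hp_pos
  have hpne : (p:ℝ) ≠ 0 := ne_of_gt hp0
  have hn0 : (0:ℝ) ≤ (G.card:ℝ) := Nat.cast_nonneg _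
  have hnp : (G.card:ℝ) ≤ (p:ℝ) := by
    exact_mod_cast (Finset.card_le_univ G).trans_eq (hcard_univ (p := p))
  have hmu0 : (0:ℝ) ≤ (G.card:ℝ)^2/(p:ℝ) := by positivity
  have hT := L_T G h0 h1 hmul lam hlam
  have hA := L_A G lam hlam
  have hDEb := L_DEb G lam hlam
  have hDE2b := L_DE2b G lam hlam Δ hΔ
  have hSMb := L_SMb G lam hlam
  have hSM0 : (0:ℝ) ≤ ∑ a : ZMod p, ∑ b : ZMod p,
      (if b = (0:ZMod p) then 0 else ((Mset G lam a b).card : ℝ)) := by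
    apply Finset.sum_nonneg; intro a _
    apply Finset.sum_nonneg; intro b _
    split
    · exact le_rfl
    · exact Nat.cast_nonneg _
  have hW0 : (0:ℝ) ≤ ∑ a : ZMod p, ∑ b : ZMod p,
      (if Δ < ((ioG G a b : ℕ) : ℝ) then
        (((ioG G a b : ℕ) : ℝ) * (dv G a (lam * b))^2) else 0) := by
    apply Finset.sum_nonneg; intro a _
    apply Finset.sum_nonneg; intro b _
    split
    · exact mul_nonneg (Nat.cast_nonneg _) (sq_nonneg _)
    · exact le_rfl
  have hmain : (p:ℝ)*((p:ℝ)*((G.card:ℝ)^2/(p:ℝ))^3) = (G.card:ℝ)^6/(p:ℝ) := by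
    field_simp
  have hTfin : ((Sfin G lam).card : ℝ) - (G.card:ℝ)^6/(p:ℝ)
      = ((G.card:ℝ)^2/(p:ℝ))*((p:ℝ)*(G.card:ℝ)^2 - (G.card:ℝ)^3)
        + 2*((G.card:ℝ)^2/(p:ℝ))*(∑ a : ZMod p, ∑ b : ZMod p, dv G a b * dv G a (lam*b))
        + (∑ a : ZMod p, ∑ b : ZMod p, dv G a b * (dv G a (lam*b))^2)
        - (G.card:ℝ)^4
        - ∑ a : ZMod p, ∑ b : ZMod p,
            (if b = (0:ZMod p) then 0 else ((Mset G lam a b).card : ℝ)) := by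
    rw [hT, hA, hmain]; ring
  have hmupn : ((G.card:ℝ)^2/(p:ℝ))*((p:ℝ)*(G.card:ℝ)^2) = (G.card:ℝ)^4 := by
    field_simp
  have hmuE1 : 0 ≤ ((G.card:ℝ)^2/(p:ℝ))*((p:ℝ)*(G.card:ℝ)^2 - (G.card:ℝ)^3) := by
    apply mul_nonneg hmu0
    nlinarith
  have hmuE2 : ((G.card:ℝ)^2/(p:ℝ))*((p:ℝ)*(G.card:ℝ)^2 - (G.card:ℝ)^3)
      ≤ (G.card:ℝ)^4 := by
    nlinarith [mul_nonneg hmu0 (pow_nonneg hn0 3)]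
  have h2mu : |2*((G.card:ℝ)^2/(p:ℝ))*(∑ a : ZMod p, ∑ b : ZMod p,
      dv G a b * dv G a (lam*b))| ≤ 2*(G.card:ℝ)^4 := by
    rw [abs_mul, abs_of_nonneg (by linarith : (0:ℝ) ≤ 2*((G.card:ℝ)^2/(p:ℝ)))]
    calc (2*((G.card:ℝ)^2/(p:ℝ)))*|∑ a : ZMod p, ∑ b : ZMod p, dv G a b * dv G a (lam*b)|
        ≤ (2*((G.card:ℝ)^2/(p:ℝ)))*((p:ℝ)*(G.card:ℝ)^2 - (G.card:ℝ)^3) :=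
          mul_le_mul_of_nonneg_left hDEb (by linarith)
      _ ≤ 2*(G.card:ℝ)^4 := by
          nlinarith [mul_nonneg hmu0 (pow_nonneg hn0 3)]
  have hDE2b' : |∑ a : ZMod p, ∑ b : ZMod p, dv G a b * (dv G a (lam*b))^2|
      ≤ Δ*((p:ℝ)*(G.card:ℝ)^2) + (G.card:ℝ)^4
        + ∑ a : ZMod p, ∑ b : ZMod p,
            (if Δ < ((ioG G a b : ℕ) : ℝ) then
              (((ioG G a b : ℕ) : ℝ) * (dv G a (lam * b))^2) else 0) := by
    have hh1 : (Δ + (G.card:ℝ)^2/(p:ℝ))*((p:ℝ)*(G.card:ℝ)^2 - (G.card:ℝ)^3)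
        ≤ (Δ + (G.card:ℝ)^2/(p:ℝ))*((p:ℝ)*(G.card:ℝ)^2) := by
      apply mul_le_mul_of_nonneg_left _ (by linarith)
      nlinarith [pow_nonneg hn0 3]
    have hh2 : (Δ + (G.card:ℝ)^2/(p:ℝ))*((p:ℝ)*(G.card:ℝ)^2)
        = Δ*((p:ℝ)*(G.card:ℝ)^2) + (G.card:ℝ)^4 := by
      rw [add_mul, hmupn]
    linarith
  have h2muDE := abs_le.mp h2mu
  have hDE2b'' := abs_le.mp hDE2b'
  have hn4 : (0:ℝ) ≤ (G.card:ℝ)^4 := by positivity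
  have hpn2 : (0:ℝ) ≤ (p:ℝ)*(G.card:ℝ)^2 := by positivity
  have hΔpn2 : (p:ℝ)*(G.card:ℝ)^2 ≤ Δ*((p:ℝ)*(G.card:ℝ)^2) := by nlinarith
  have hgoalcomm : Δ * (G.card:ℝ)^2 * (p:ℝ) = Δ*((p:ℝ)*(G.card:ℝ)^2) := by ring
  rw [show |((Sfin G lam).card : ℝ) - (G.card : ℝ)^6 / (p : ℝ)|
      = |((G.card:ℝ)^2/(p:ℝ))*((p:ℝ)*(G.card:ℝ)^2 - (G.card:ℝ)^3)
        + 2*((G.card:ℝ)^2/(p:ℝ))*(∑ a : ZMod p, ∑ b : ZMod p, dv G a b * dv G a (lam*b))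
        + (∑ a : ZMod p, ∑ b : ZMod p, dv G a b * (dv G a (lam*b))^2)
        - (G.card:ℝ)^4
        - ∑ a : ZMod p, ∑ b : ZMod p,
            (if b = (0:ZMod p) then 0 else ((Mset G lam a b).card : ℝ))| from by rw [hTfin]]
  apply abs_le.mpr
  constructor
  · linarith [h2muDE.1, h2muDE.2, hDE2b''.1, hDE2b''.2]
  · linarith [h2muDE.1, h2muDE.2, hDE2b''.1, hDE2b''.2]

end CollinearAux

/-- For a multiplicative subgroup `G ≤ F_p^*`, `λ ∈ F_p^*` and a parameter `Δ ≥ 3`,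
`|T_λ(G) − |G|⁶/p| ≪ |G|⁴ + Δ|G|²p + W`, where `W` is the contribution of lines with
`ι_G(ℓ_{a,b}) > Δ` to `Σ ι_G(ℓ_{a,b})(ι_G(ℓ_{a,λb}) − |G|²/p)²`. -/
theorem collinear_triples_splitting :
    ∃ C : ℝ, 0 < C ∧ ∀ (p : ℕ) [Fact p.Prime] (G : Finset (ZMod p)),
      (0 : ZMod p) ∉ G → (1 : ZMod p) ∈ G → (∀ x ∈ G, ∀ y ∈ G, x * y ∈ G) →
      ∀ lam : ZMod p, lam ≠ 0 → ∀ Δ : ℝ, 3 ≤ Δ →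
      |((((G ×ˢ G ×ˢ G) ×ˢ (G ×ˢ G ×ˢ G)).filter (fun t =>
            t.1.1 - t.1.2.2 ≠ 0 ∧ t.2.1 - lam * t.2.2.2 ≠ 0 ∧
            (t.1.1 - t.1.2.1) / (t.1.1 - t.1.2.2)
              = (t.2.1 - lam * t.2.2.1) / (t.2.1 - lam * t.2.2.2))).card : ℝ)
          - (G.card : ℝ)^6 / (p : ℝ)|
        ≤ C * ((G.card : ℝ)^4 + Δ * (G.card : ℝ)^2 * (p : ℝ)
            + ∑ a : ZMod p, ∑ b : ZMod p,
              (if Δ < (((G ×ˢ G).filter (fun xy => xy.2 = a * xy.1 + b)).card : ℝ) then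
                ((((G ×ˢ G).filter (fun xy => xy.2 = a * xy.1 + b)).card : ℝ) *
                  ((((G ×ˢ G).filter (fun xy =>
                      xy.2 = a * xy.1 + lam * b)).card : ℝ)
                    - (G.card : ℝ)^2 / (p : ℝ))^2)
              else 0)) := by
  refine ⟨100, by norm_num, ?_⟩
  intro p _ G h0 h1 hmul lam hlam Δ hΔ
  show |((Sfin G lam).card : ℝ) - (G.card : ℝ)^6 / (p : ℝ)|
        ≤ 100 * ((G.card : ℝ)^4 + Δ * (G.card : ℝ)^2 * (p : ℝ)
            + ∑ a : ZMod p, ∑ b : ZMod p,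
              (if Δ < ((ioG G a b : ℕ) : ℝ) then
                (((ioG G a b : ℕ) : ℝ) *
                  (((ioG G a (lam * b) : ℕ) : ℝ) - (G.card : ℝ)^2 / (p : ℝ))^2)
              else 0))
  exact final_est G h0 h1 hmul lam hlam Δ hΔ
end

section
/- For any finite set U ⊆ F_p^* with |U| = U, D_×(U) ≪ U^2·T(U) + U^6, where D_×(U) is the number of solutions to (u1−v1)(u2−v2) = (u3−v3)(u4−v4) with all u_i, v_i ∈ U, and T(U) is the number of solutions to (u1−v1)/(u1−w1) = (u2−v2)/(u2−w2) with u_i, v_i, w_i ∈ U and u_i ≠ w_i. -/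
open Finset


section Helpers
variable {α : Type*} [DecidableEq α]

lemma pairDiag_card (A : Finset α) :
    ((A ×ˢ A).filter fun r => r.1 = r.2).card = A.card := by
  apply card_nbij' (fun r => r.1) (fun a => (a, a))
  · intro r hr
    simp only [mem_coe, mem_filter, mem_product] at hr
    exact hr.1.1
  · intro a ha
    simp [mem_coe.mp ha]
  · intro r hr
    simp only [mem_coe, mem_filter, mem_product] at hr
    exact Prod.ext rfl hr.2
  · intro a ha
    rfl

lemma pairOffdiag_card (A : Finset α) :
    ((A ×ˢ A).filter fun r => r.1 ≠ r.2).card = A.card ^ 2 - A.card := by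
  have h := card_filter_add_card_filter_not (s := A ×ˢ A) (p := fun r => r.1 = r.2)
  rw [pairDiag_card, card_product] at h
  have h2 : A.card ^ 2 = A.card * A.card := sq A.card
  simp only [ne_eq]
  omega

lemma tripDiag_card (A : Finset α) :
    ((A ×ˢ (A ×ˢ A)).filter fun r => r.1 = r.2.2).card = A.card ^ 2 := by
  have h : ((A ×ˢ (A ×ˢ A)).filter fun r => r.1 = r.2.2).card = (A ×ˢ A).card := by
    apply card_nbij' (fun r => (r.1, r.2.1)) (fun x => (x.1, (x.2, x.1)))
    · intro r hr
      simp only [mem_coe, mem_filter, mem_product] at hr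
      simp [mem_product, hr.1.1, hr.1.2.1]
    · intro x hx
      simp only [mem_coe, mem_product] at hx
      simp [mem_filter, mem_product, hx.1, hx.2]
    · intro r hr
      simp only [mem_coe, mem_filter, mem_product] at hr
      exact Prod.ext rfl (Prod.ext rfl hr.2)
    · intro x hx
      rfl
  rw [h, card_product, sq]

lemma tripOffdiag_card (A : Finset α) :
    ((A ×ˢ (A ×ˢ A)).filter fun r => r.1 ≠ r.2.2).card = A.card ^ 3 - A.card ^ 2 := by
  have h := card_filter_add_card_filter_not (s := A ×ˢ (A ×ˢ A))
    (p := fun r => r.1 = r.2.2)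
  rw [tripDiag_card, card_product, card_product] at h
  have h2 : A.card ^ 3 = A.card * (A.card * A.card) := by ring
  have h3 : A.card ^ 2 ≤ A.card ^ 3 := by
    rcases Nat.eq_zero_or_pos A.card with hc | hc
    · simp [hc]
    · exact Nat.pow_le_pow_right hc (by norm_num)
  simp only [ne_eq]
  omega

end Helpers

section Count
variable {K : Type*} [Field K] [Fintype K] [DecidableEq K]

lemma sum_q (U : Finset K) (l : K) :
    ∑ s : K, ((U ×ˢ U).filter (fun P => P.2 - l * P.1 = s)).card = U.card ^ 2 := by
  have h := card_eq_sum_card_fiberwise (f := fun P : K × K => P.2 - l * P.1)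
    (s := U ×ˢ U) (t := univ) (fun x _ => mem_univ _)
  rw [card_product, ← sq] at h
  exact h.symm

lemma Acard (U : Finset K) (l : K) :
    (((U ×ˢ U) ×ˢ (U ×ˢ U)).filter
        (fun x => x.1.1 - x.1.2 = l * (x.2.1 - x.2.2) ∧ x.2.1 ≠ x.2.2)).card
      = ∑ s : K, (((U ×ˢ U).filter (fun P => P.2 - l * P.1 = s)).card ^ 2
          - ((U ×ˢ U).filter (fun P => P.2 - l * P.1 = s)).card) := by
  have h1 : (((U ×ˢ U) ×ˢ (U ×ˢ U)).filter
        (fun x => x.1.1 - x.1.2 = l * (x.2.1 - x.2.2) ∧ x.2.1 ≠ x.2.2)).card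
      = (((U ×ˢ U) ×ˢ (U ×ˢ U)).filter
        (fun r => r.1.2 - l * r.1.1 = r.2.2 - l * r.2.1 ∧ r.1.1 ≠ r.2.1)).card := by
    apply card_nbij' (fun x => ((x.2.1, x.1.1), (x.2.2, x.1.2)))
      (fun r => ((r.1.2, r.2.2), (r.1.1, r.2.1)))
    · intro x hx
      simp only [mem_coe, mem_filter, mem_product] at hx ⊢
      obtain ⟨⟨⟨ha, hb⟩, hc, hd⟩, heq, hne⟩ := hx
      exact ⟨⟨⟨hc, ha⟩, hd, hb⟩, by linear_combination heq, hne⟩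
    · intro r hr
      simp only [mem_coe, mem_filter, mem_product] at hr ⊢
      obtain ⟨⟨⟨ha, hb⟩, hc, hd⟩, heq, hne⟩ := hr
      exact ⟨⟨⟨hb, hd⟩, ha, hc⟩, by linear_combination heq, hne⟩
    · intro x hx
      rfl
    · intro r hr
      rfl
  rw [h1]
  have h2 := card_eq_sum_card_fiberwise (f := fun r : (K × K) × (K × K) => r.1.2 - l * r.1.1)
    (s := ((U ×ˢ U) ×ˢ (U ×ˢ U)).filter
        (fun r => r.1.2 - l * r.1.1 = r.2.2 - l * r.2.1 ∧ r.1.1 ≠ r.2.1))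
    (t := univ) (fun x _ => mem_univ _)
  rw [h2]
  refine Finset.sum_congr rfl (fun s _ => ?_)
  have h3 : ((((U ×ˢ U) ×ˢ (U ×ˢ U)).filter
        (fun r => r.1.2 - l * r.1.1 = r.2.2 - l * r.2.1 ∧ r.1.1 ≠ r.2.1)).filter
        (fun r => r.1.2 - l * r.1.1 = s))
      = (((U ×ˢ U).filter (fun P => P.2 - l * P.1 = s)) ×ˢ
          ((U ×ˢ U).filter (fun P => P.2 - l * P.1 = s))).filter (fun r => r.1 ≠ r.2) := by
    ext r
    simp only [mem_filter, mem_product, ne_eq]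
    constructor
    · rintro ⟨⟨⟨hm1, hm2⟩, heq, hne⟩, hs⟩
      refine ⟨⟨⟨hm1, hs⟩, hm2, by rw [← heq]; exact hs⟩, fun h => hne (congrArg Prod.fst h)⟩
    · rintro ⟨⟨⟨hm1, hs1⟩, hm2, hs2⟩, hne⟩
      refine ⟨⟨⟨hm1, hm2⟩, hs1.trans hs2.symm, fun h => hne ?_⟩, hs1⟩
      exact Prod.ext h (by linear_combination hs1 - hs2 + l * h)
  rw [h3, pairOffdiag_card]

lemma Tcard (U : Finset K) (l : K) :
    (((U ×ˢ U ×ˢ U) ×ˢ (U ×ˢ U ×ˢ U)).filter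
        (fun t => t.2.1 - t.2.2.1 = l * (t.1.1 - t.1.2.1) ∧
          t.2.1 - t.2.2.2 = l * (t.1.1 - t.1.2.2) ∧ t.1.1 ≠ t.1.2.2)).card
      = ∑ s : K, (((U ×ˢ U).filter (fun P => P.2 - l * P.1 = s)).card ^ 3
          - ((U ×ˢ U).filter (fun P => P.2 - l * P.1 = s)).card ^ 2) := by
  have h1 : (((U ×ˢ U ×ˢ U) ×ˢ (U ×ˢ U ×ˢ U)).filter
        (fun t => t.2.1 - t.2.2.1 = l * (t.1.1 - t.1.2.1) ∧
          t.2.1 - t.2.2.2 = l * (t.1.1 - t.1.2.2) ∧ t.1.1 ≠ t.1.2.2)).card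
      = (((U ×ˢ U) ×ˢ ((U ×ˢ U) ×ˢ (U ×ˢ U))).filter
        (fun r => r.2.1.2 - l * r.2.1.1 = r.1.2 - l * r.1.1 ∧
          r.2.2.2 - l * r.2.2.1 = r.1.2 - l * r.1.1 ∧ r.1.1 ≠ r.2.2.1)).card := by
    apply card_nbij'
      (fun t => ((t.1.1, t.2.1), ((t.1.2.1, t.2.2.1), (t.1.2.2, t.2.2.2))))
      (fun r => ((r.1.1, (r.2.1.1, r.2.2.1)), (r.1.2, (r.2.1.2, r.2.2.2))))
    · intro t ht
      simp only [mem_coe, mem_filter, mem_product] at ht ⊢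
      obtain ⟨⟨⟨h1, h2, h3⟩, h4, h5, h6⟩, hv, hw, hne⟩ := ht
      exact ⟨⟨⟨h1, h4⟩, ⟨h2, h5⟩, h3, h6⟩, by linear_combination -hv, by linear_combination -hw, hne⟩
    · intro r hr
      simp only [mem_coe, mem_filter, mem_product] at hr ⊢
      obtain ⟨⟨⟨h1, h2⟩, ⟨h3, h4⟩, h5, h6⟩, hv, hw, hne⟩ := hr
      exact ⟨⟨⟨h1, h3, h5⟩, h2, h4, h6⟩, by linear_combination -hv, by linear_combination -hw, hne⟩
    · intro t ht
      rfl
    · intro r hr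
      rfl
  rw [h1]
  have h2 := card_eq_sum_card_fiberwise
    (f := fun r : (K × K) × ((K × K) × (K × K)) => r.1.2 - l * r.1.1)
    (s := ((U ×ˢ U) ×ˢ ((U ×ˢ U) ×ˢ (U ×ˢ U))).filter
        (fun r => r.2.1.2 - l * r.2.1.1 = r.1.2 - l * r.1.1 ∧
          r.2.2.2 - l * r.2.2.1 = r.1.2 - l * r.1.1 ∧ r.1.1 ≠ r.2.2.1))
    (t := univ) (fun x _ => mem_univ _)
  rw [h2]
  refine Finset.sum_congr rfl (fun s _ => ?_)
  have h3 : ((((U ×ˢ U) ×ˢ ((U ×ˢ U) ×ˢ (U ×ˢ U))).filter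
        (fun r => r.2.1.2 - l * r.2.1.1 = r.1.2 - l * r.1.1 ∧
          r.2.2.2 - l * r.2.2.1 = r.1.2 - l * r.1.1 ∧ r.1.1 ≠ r.2.2.1)).filter
        (fun r => r.1.2 - l * r.1.1 = s))
      = (((U ×ˢ U).filter (fun P => P.2 - l * P.1 = s)) ×ˢ
          (((U ×ˢ U).filter (fun P => P.2 - l * P.1 = s)) ×ˢ
           ((U ×ˢ U).filter (fun P => P.2 - l * P.1 = s)))).filter
          (fun r => r.1 ≠ r.2.2) := by
    ext r
    simp only [mem_filter, mem_product, ne_eq]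
    constructor
    · rintro ⟨⟨⟨hm1, hm2, hm3⟩, hv, hw, hne⟩, hs⟩
      exact ⟨⟨⟨hm1, hs⟩, ⟨hm2, hv.trans hs⟩, hm3, hw.trans hs⟩,
        fun h => hne (congrArg (fun z : K × K => z.1) h)⟩
    · rintro ⟨⟨⟨hm1, hs1⟩, ⟨hm2, hs2⟩, hm3, hs3⟩, hne⟩
      refine ⟨⟨⟨hm1, hm2, hm3⟩, hs2.trans hs1.symm, hs3.trans hs1.symm, fun h => hne ?_⟩, hs1⟩
      exact Prod.ext h (by linear_combination hs1 - hs3 + l * h)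
  rw [h3, tripOffdiag_card]

lemma cs_ineq (q : K → ℕ) :
    (∑ s : K, ((q s : ℝ) ^ 2 - (q s : ℝ))) ^ 2
      ≤ (∑ s : K, (q s : ℝ)) * ∑ s : K, ((q s : ℝ) ^ 3 - (q s : ℝ) ^ 2) := by
  have key := sum_sq_le_sum_mul_sum_of_sq_eq_mul (univ : Finset K)
    (r := fun s => (q s : ℝ) ^ 2 - (q s : ℝ))
    (f := fun s => (q s : ℝ))
    (g := fun s => (q s : ℝ) * ((q s : ℝ) - 1) ^ 2)
    (fun i _ => Nat.cast_nonneg _) (fun i _ => by positivity) (fun i _ => by ring)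
  refine key.trans ?_
  have hf : 0 ≤ ∑ s : K, (q s : ℝ) := sum_nonneg fun i _ => Nat.cast_nonneg _
  refine mul_le_mul_of_nonneg_left (sum_le_sum fun i _ => ?_) hf
  rcases Nat.eq_zero_or_pos (q i) with h | h
  · simp [h]
  · have h1 : (1 : ℝ) ≤ (q i : ℝ) := by exact_mod_cast h
    nlinarith [h1]

end Count



set_option maxHeartbeats 1000000 in
/-- For any finite `U ⊆ F_p^*`, `D_×(U) ≪ |U|²·T(U) + |U|⁶` with an absolute
implied constant, where `D_×(U)` counts solutions of
`(u₁−v₁)(u₂−v₂) = (u₃−v₃)(u₄−v₄)` and `T(U)` counts collinear triples. -/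
theorem Dtimes_bound_by_T :
    ∃ C : ℝ, 0 < C ∧ ∀ (p : ℕ) [Fact p.Prime] (U : Finset (ZMod p)),
      (0 : ZMod p) ∉ U →
      (((((U ×ˢ U) ×ˢ (U ×ˢ U)) ×ˢ ((U ×ˢ U) ×ˢ (U ×ˢ U))).filter (fun t =>
          (t.1.1.1 - t.1.1.2) * (t.1.2.1 - t.1.2.2)
            = (t.2.1.1 - t.2.1.2) * (t.2.2.1 - t.2.2.2))).card : ℝ)
      ≤ C * ((U.card : ℝ)^2 *
          ((((U ×ˢ U ×ˢ U) ×ˢ (U ×ˢ U ×ˢ U)).filter (fun t =>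
              t.1.1 - t.1.2.2 ≠ 0 ∧ t.2.1 - t.2.2.2 ≠ 0 ∧
              (t.1.1 - t.1.2.1) / (t.1.1 - t.1.2.2)
                = (t.2.1 - t.2.2.1) / (t.2.1 - t.2.2.2))).card : ℝ)
        + (U.card : ℝ)^6) := by
  refine ⟨4, by norm_num, ?_⟩
  intro p hp U _
  haveI := hp
  haveI : NeZero p := ⟨(Fact.out : p.Prime).ne_zero⟩
  set Dset := (((U ×ˢ U) ×ˢ (U ×ˢ U)) ×ˢ ((U ×ˢ U) ×ˢ (U ×ˢ U))).filter (fun t =>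
      (t.1.1.1 - t.1.1.2) * (t.1.2.1 - t.1.2.2)
        = (t.2.1.1 - t.2.1.2) * (t.2.2.1 - t.2.2.2)) with hDdef
  set Tset := ((U ×ˢ U ×ˢ U) ×ˢ (U ×ˢ U ×ˢ U)).filter (fun t =>
      t.1.1 - t.1.2.2 ≠ 0 ∧ t.2.1 - t.2.2.2 ≠ 0 ∧
      (t.1.1 - t.1.2.1) / (t.1.1 - t.1.2.2)
        = (t.2.1 - t.2.2.1) / (t.2.1 - t.2.2.2)) with hTdef
  set D1 := Dset.filter (fun t => ¬ (t.2.1.1 - t.2.1.2) * (t.2.2.1 - t.2.2.2) = 0) with hD1def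
  -- splitting off the zero part
  have hsplit := card_filter_add_card_filter_not (s := Dset)
    (p := fun t => (t.2.1.1 - t.2.1.2) * (t.2.2.1 - t.2.2.2) = 0)
  -- bound on the zero part
  have hQ0 : (((U ×ˢ U) ×ˢ (U ×ˢ U)).filter
      (fun x => (x.1.1 - x.1.2) * (x.2.1 - x.2.2) = 0)).card ≤ 2 * U.card ^ 3 := by
    have hsub : ((U ×ˢ U) ×ˢ (U ×ˢ U)).filter (fun x => (x.1.1 - x.1.2) * (x.2.1 - x.2.2) = 0)
        ⊆ (((U ×ˢ U) ×ˢ (U ×ˢ U)).filter (fun x => x.1.1 = x.1.2))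
          ∪ (((U ×ˢ U) ×ˢ (U ×ˢ U)).filter (fun x => x.2.1 = x.2.2)) := by
      intro x hx
      simp only [mem_filter, mem_union] at hx ⊢
      rcases mul_eq_zero.mp hx.2 with h | h
      · exact Or.inl ⟨hx.1, sub_eq_zero.mp h⟩
      · exact Or.inr ⟨hx.1, sub_eq_zero.mp h⟩
    refine (card_le_card hsub).trans ((card_union_le _ _).trans ?_)
    have e1 : (((U ×ˢ U) ×ˢ (U ×ˢ U)).filter (fun x => x.1.1 = x.1.2)).card ≤ U.card ^ 3 := by
      have h := card_le_card_of_injOn (s := ((U ×ˢ U) ×ˢ (U ×ˢ U)).filter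
          (fun x => x.1.1 = x.1.2)) (t := U ×ˢ (U ×ˢ U)) (fun x => (x.1.1, x.2)) ?_ ?_
      · refine h.trans ?_
        rw [card_product, card_product]
        exact le_of_eq (by ring)
      · intro x hx
        simp only [mem_coe, mem_filter, mem_product] at hx
        exact mem_product.mpr ⟨hx.1.1.1, mem_product.mpr hx.1.2⟩
      · intro x hx y hy hxy
        simp only [mem_coe, mem_filter, mem_product] at hx hy
        simp only [Prod.mk.injEq] at hxy
        obtain ⟨h1, h2⟩ := hxy
        exact Prod.ext (Prod.ext h1 (by rw [← hx.2, ← hy.2]; exact h1)) h2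
    have e2 : (((U ×ˢ U) ×ˢ (U ×ˢ U)).filter (fun x => x.2.1 = x.2.2)).card ≤ U.card ^ 3 := by
      have h := card_le_card_of_injOn (s := ((U ×ˢ U) ×ˢ (U ×ˢ U)).filter
          (fun x => x.2.1 = x.2.2)) (t := (U ×ˢ U) ×ˢ U) (fun x => (x.1, x.2.1)) ?_ ?_
      · refine h.trans ?_
        rw [card_product, card_product]
        exact le_of_eq (by ring)
      · intro x hx
        simp only [mem_coe, mem_filter, mem_product] at hx
        exact mem_product.mpr ⟨mem_product.mpr hx.1.1, hx.1.2.1⟩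
      · intro x hx y hy hxy
        simp only [mem_coe, mem_filter, mem_product] at hx hy
        simp only [Prod.mk.injEq] at hxy
        obtain ⟨h1, h2⟩ := hxy
        exact Prod.ext h1 (Prod.ext h2 (by rw [← hx.2, ← hy.2]; exact h2))
    omega
  have hZle : (Dset.filter (fun t =>
      (t.2.1.1 - t.2.1.2) * (t.2.2.1 - t.2.2.2) = 0)).card ≤ 4 * U.card ^ 6 := by
    have hsub : Dset.filter (fun t => (t.2.1.1 - t.2.1.2) * (t.2.2.1 - t.2.2.2) = 0)
        ⊆ (((U ×ˢ U) ×ˢ (U ×ˢ U)).filter (fun x => (x.1.1 - x.1.2) * (x.2.1 - x.2.2) = 0)) ×ˢ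
          (((U ×ˢ U) ×ˢ (U ×ˢ U)).filter (fun x => (x.1.1 - x.1.2) * (x.2.1 - x.2.2) = 0)) := by
      intro t ht
      rw [mem_filter, hDdef, mem_filter] at ht
      obtain ⟨⟨hmem, heq⟩, hz⟩ := ht
      rw [mem_product, mem_filter, mem_filter]
      exact ⟨⟨(mem_product.mp hmem).1, heq.trans hz⟩, (mem_product.mp hmem).2, hz⟩
    refine (card_le_card hsub).trans ?_
    rw [card_product]
    calc _ ≤ (2 * U.card ^ 3) * (2 * U.card ^ 3) := Nat.mul_le_mul hQ0 hQ0
      _ = 4 * U.card ^ 6 := by ring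
  -- the main fiberwise bound
  have hperl : ∀ l : ZMod p,
      ((D1.filter (fun t => (t.1.1.1 - t.1.1.2) * (t.2.1.1 - t.2.1.2)⁻¹ = l)).card : ℝ)
        ≤ ((U.card : ℝ)) ^ 2 *
          ((Tset.filter (fun t => (t.2.1 - t.2.2.2) / (t.1.1 - t.1.2.2) = l)).card : ℝ) := by
    intro l
    by_cases hl : l = 0
    · have hempty : D1.filter (fun t => (t.1.1.1 - t.1.1.2) * (t.2.1.1 - t.2.1.2)⁻¹ = l) = ∅ := by
        rw [filter_eq_empty_iff]
        intro t ht
        rw [hD1def, mem_filter, hDdef, mem_filter] at ht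
        obtain ⟨⟨_, heq⟩, hnz⟩ := ht
        have h3 : t.2.1.1 - t.2.1.2 ≠ 0 := (mul_ne_zero_iff.mp hnz).1
        have hL : (t.1.1.1 - t.1.1.2) * (t.1.2.1 - t.1.2.2) ≠ 0 := by rw [heq]; exact hnz
        have h1 : t.1.1.1 - t.1.1.2 ≠ 0 := (mul_ne_zero_iff.mp hL).1
        subst hl
        exact mul_ne_zero h1 (inv_ne_zero h3)
      rw [hempty]
      simp only [card_empty, Nat.cast_zero]
      positivity
    · -- fiber is a square
      have hbij : (D1.filter (fun t => (t.1.1.1 - t.1.1.2) * (t.2.1.1 - t.2.1.2)⁻¹ = l)).card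
          = ((((U ×ˢ U) ×ˢ (U ×ˢ U)).filter
              (fun x => x.1.1 - x.1.2 = l * (x.2.1 - x.2.2) ∧ x.2.1 ≠ x.2.2)) ×ˢ
             (((U ×ˢ U) ×ˢ (U ×ˢ U)).filter
              (fun x => x.1.1 - x.1.2 = l * (x.2.1 - x.2.2) ∧ x.2.1 ≠ x.2.2))).card := by
        apply card_nbij' (fun t => ((t.1.1, t.2.1), (t.2.2, t.1.2)))
          (fun x => ((x.1.1, x.2.2), (x.1.2, x.2.1)))
        · intro t ht
          rw [mem_coe, mem_filter, hD1def, mem_filter, hDdef, mem_filter] at ht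
          obtain ⟨⟨⟨hmem, heq⟩, hnz⟩, hkey⟩ := ht
          have hm1 := (mem_product.mp hmem).1
          have hm2 := (mem_product.mp hmem).2
          have h3 : t.2.1.1 - t.2.1.2 ≠ 0 := (mul_ne_zero_iff.mp hnz).1
          have hL : (t.1.1.1 - t.1.1.2) * (t.1.2.1 - t.1.2.2) ≠ 0 := by rw [heq]; exact hnz
          have h2 : t.1.2.1 - t.1.2.2 ≠ 0 := (mul_ne_zero_iff.mp hL).2
          have hk' : t.1.1.1 - t.1.1.2 = l * (t.2.1.1 - t.2.1.2) := by
            rw [← div_eq_mul_inv] at hkey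
            exact (div_eq_iff h3).mp hkey
          have h4eq : t.2.2.1 - t.2.2.2 = l * (t.1.2.1 - t.1.2.2) := by
            apply mul_left_cancel₀ h3
            linear_combination -heq + (t.1.2.1 - t.1.2.2) * hk'
          rw [mem_coe, mem_product]
          constructor
          · rw [mem_filter]
            exact ⟨mem_product.mpr ⟨(mem_product.mp hm1).1, (mem_product.mp hm2).1⟩,
              hk', sub_ne_zero.mp h3⟩
          · rw [mem_filter]
            exact ⟨mem_product.mpr ⟨(mem_product.mp hm2).2, (mem_product.mp hm1).2⟩,
              h4eq, sub_ne_zero.mp h2⟩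
        · intro x hx
          rw [mem_coe, mem_product, mem_filter, mem_filter] at hx
          obtain ⟨⟨hmem1, hc1, hne1⟩, hmem2, hc2, hne2⟩ := hx
          have hs12 : x.1.2.1 - x.1.2.2 ≠ 0 := sub_ne_zero.mpr hne1
          have hs22 : x.2.2.1 - x.2.2.2 ≠ 0 := sub_ne_zero.mpr hne2
          rw [mem_coe, mem_filter, hD1def, mem_filter, hDdef, mem_filter]
          refine ⟨⟨⟨?_, ?_⟩, ?_⟩, ?_⟩
          · rw [mem_product]
            constructor
            · exact mem_product.mpr ⟨(mem_product.mp hmem1).1, (mem_product.mp hmem2).2⟩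
            · exact mem_product.mpr ⟨(mem_product.mp hmem1).2, (mem_product.mp hmem2).1⟩
          · show (x.1.1.1 - x.1.1.2) * (x.2.2.1 - x.2.2.2)
                = (x.1.2.1 - x.1.2.2) * (x.2.1.1 - x.2.1.2)
            linear_combination (x.2.2.1 - x.2.2.2) * hc1 - (x.1.2.1 - x.1.2.2) * hc2
          · show ¬ (x.1.2.1 - x.1.2.2) * (x.2.1.1 - x.2.1.2) = 0
            refine mul_ne_zero hs12 ?_
            rw [hc2]
            exact mul_ne_zero hl hs22
          · show (x.1.1.1 - x.1.1.2) * (x.1.2.1 - x.1.2.2)⁻¹ = l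
            rw [hc1]
            exact mul_inv_cancel_right₀ hs12 l
        · intro t ht
          rfl
        · intro x hx
          rfl
      -- counts and Cauchy-Schwarz
      have hAc := Acard U l
      have hTc := Tcard U l
      have hsumq := sum_q U l
      have hq23 : ∀ n : ℕ, n ^ 2 ≤ n ^ 3 := by
        intro n
        rcases Nat.eq_zero_or_pos n with h | h
        · simp [h]
        · exact Nat.pow_le_pow_right h (by norm_num)
      have hcastA : (((((U ×ˢ U) ×ˢ (U ×ˢ U)).filter
            (fun x => x.1.1 - x.1.2 = l * (x.2.1 - x.2.2) ∧ x.2.1 ≠ x.2.2)).card : ℝ))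
          = ∑ s : ZMod p, ((((U ×ˢ U).filter (fun P => P.2 - l * P.1 = s)).card : ℝ) ^ 2
              - (((U ×ˢ U).filter (fun P => P.2 - l * P.1 = s)).card : ℝ)) := by
        rw [hAc, Nat.cast_sum]
        refine sum_congr rfl fun s _ => ?_
        rw [Nat.cast_sub (Nat.le_self_pow two_ne_zero _)]
        push_cast
        ring
      have hcastT : (((((U ×ˢ U ×ˢ U) ×ˢ (U ×ˢ U ×ˢ U)).filter
            (fun t => t.2.1 - t.2.2.1 = l * (t.1.1 - t.1.2.1) ∧
              t.2.1 - t.2.2.2 = l * (t.1.1 - t.1.2.2) ∧ t.1.1 ≠ t.1.2.2)).card : ℝ))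
          = ∑ s : ZMod p, ((((U ×ˢ U).filter (fun P => P.2 - l * P.1 = s)).card : ℝ) ^ 3
              - (((U ×ˢ U).filter (fun P => P.2 - l * P.1 = s)).card : ℝ) ^ 2) := by
        rw [hTc, Nat.cast_sum]
        refine sum_congr rfl fun s _ => ?_
        rw [Nat.cast_sub (hq23 _)]
        push_cast
        ring
      have hcastq : (∑ s : ZMod p, (((U ×ˢ U).filter
            (fun P => P.2 - l * P.1 = s)).card : ℝ)) = (U.card : ℝ) ^ 2 := by
        rw [← Nat.cast_sum]
        exact_mod_cast congrArg (Nat.cast : ℕ → ℝ) hsumq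
      have hcs := cs_ineq (K := ZMod p)
        (fun s => ((U ×ˢ U).filter (fun P => P.2 - l * P.1 = s)).card)
      -- T' is contained in the fiber of Tset
      have hsubT : ((U ×ˢ U ×ˢ U) ×ˢ (U ×ˢ U ×ˢ U)).filter
            (fun t => t.2.1 - t.2.2.1 = l * (t.1.1 - t.1.2.1) ∧
              t.2.1 - t.2.2.2 = l * (t.1.1 - t.1.2.2) ∧ t.1.1 ≠ t.1.2.2)
          ⊆ Tset.filter (fun t => (t.2.1 - t.2.2.2) / (t.1.1 - t.1.2.2) = l) := by
        intro t ht
        rw [mem_filter] at ht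
        obtain ⟨hmem, hv, hw, hne⟩ := ht
        have h1 : t.1.1 - t.1.2.2 ≠ 0 := sub_ne_zero.mpr hne
        have h2 : t.2.1 - t.2.2.2 ≠ 0 := by rw [hw]; exact mul_ne_zero hl h1
        rw [mem_filter, hTdef, mem_filter]
        refine ⟨⟨hmem, h1, h2, ?_⟩, ?_⟩
        · rw [hv, hw, mul_div_mul_left _ _ hl]
        · rw [hw]
          exact mul_div_cancel_right₀ l h1
      calc ((D1.filter (fun t => (t.1.1.1 - t.1.1.2) * (t.2.1.1 - t.2.1.2)⁻¹ = l)).card : ℝ)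
          = (((((U ×ˢ U) ×ˢ (U ×ˢ U)).filter
              (fun x => x.1.1 - x.1.2 = l * (x.2.1 - x.2.2) ∧ x.2.1 ≠ x.2.2)).card : ℝ)) ^ 2 := by
            rw [hbij, card_product]
            push_cast
            ring
        _ ≤ (∑ s : ZMod p, (((U ×ˢ U).filter (fun P => P.2 - l * P.1 = s)).card : ℝ)) *
            ∑ s : ZMod p, ((((U ×ˢ U).filter (fun P => P.2 - l * P.1 = s)).card : ℝ) ^ 3
              - (((U ×ˢ U).filter (fun P => P.2 - l * P.1 = s)).card : ℝ) ^ 2) := by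
            rw [hcastA]
            exact hcs
        _ = (U.card : ℝ) ^ 2 * (((((U ×ˢ U ×ˢ U) ×ˢ (U ×ˢ U ×ˢ U)).filter
              (fun t => t.2.1 - t.2.2.1 = l * (t.1.1 - t.1.2.1) ∧
                t.2.1 - t.2.2.2 = l * (t.1.1 - t.1.2.2) ∧ t.1.1 ≠ t.1.2.2)).card : ℝ)) := by
            rw [hcastq, hcastT]
        _ ≤ (U.card : ℝ) ^ 2 *
            ((Tset.filter (fun t => (t.2.1 - t.2.2.2) / (t.1.1 - t.1.2.2) = l)).card : ℝ) := by
            have := card_le_card hsubT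
            have hc : ((((U ×ˢ U ×ˢ U) ×ˢ (U ×ˢ U ×ˢ U)).filter
                (fun t => t.2.1 - t.2.2.1 = l * (t.1.1 - t.1.2.1) ∧
                  t.2.1 - t.2.2.2 = l * (t.1.1 - t.1.2.2) ∧ t.1.1 ≠ t.1.2.2)).card : ℝ)
                ≤ ((Tset.filter
                  (fun t => (t.2.1 - t.2.2.2) / (t.1.1 - t.1.2.2) = l)).card : ℝ) := by
              exact_mod_cast this
            have hnn : (0 : ℝ) ≤ (U.card : ℝ) ^ 2 := by positivity
            exact mul_le_mul_of_nonneg_left hc hnn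
  -- assemble
  have hDfib := card_eq_sum_card_fiberwise
    (f := fun t : (((ZMod p × ZMod p) × (ZMod p × ZMod p)) ×
        ((ZMod p × ZMod p) × (ZMod p × ZMod p))) =>
      (t.1.1.1 - t.1.1.2) * (t.2.1.1 - t.2.1.2)⁻¹)
    (s := D1) (t := univ) (fun x _ => mem_univ _)
  have hTfib := card_eq_sum_card_fiberwise
    (f := fun t : ((ZMod p × ZMod p × ZMod p) × (ZMod p × ZMod p × ZMod p)) =>
      (t.2.1 - t.2.2.2) / (t.1.1 - t.1.2.2))
    (s := Tset) (t := univ) (fun x _ => mem_univ _)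
  have hD1le : (D1.card : ℝ) ≤ (U.card : ℝ) ^ 2 * (Tset.card : ℝ) := by
    rw [hDfib, Nat.cast_sum]
    calc (∑ l : ZMod p, ((D1.filter
            (fun t => (t.1.1.1 - t.1.1.2) * (t.2.1.1 - t.2.1.2)⁻¹ = l)).card : ℝ))
        ≤ ∑ l : ZMod p, (U.card : ℝ) ^ 2 *
            ((Tset.filter (fun t => (t.2.1 - t.2.2.2) / (t.1.1 - t.1.2.2) = l)).card : ℝ) :=
          sum_le_sum fun l _ => hperl l
      _ = (U.card : ℝ) ^ 2 * ∑ l : ZMod p,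
            ((Tset.filter (fun t => (t.2.1 - t.2.2.2) / (t.1.1 - t.1.2.2) = l)).card : ℝ) := by
          rw [mul_sum]
      _ = (U.card : ℝ) ^ 2 * (Tset.card : ℝ) := by
          rw [← Nat.cast_sum, ← hTfib]
  have hZr : ((Dset.filter (fun t =>
      (t.2.1.1 - t.2.1.2) * (t.2.2.1 - t.2.2.2) = 0)).card : ℝ) ≤ 4 * (U.card : ℝ) ^ 6 := by
    exact_mod_cast hZle
  have htotal : ((Dset.card : ℝ))
      = ((Dset.filter (fun t =>
          (t.2.1.1 - t.2.1.2) * (t.2.2.1 - t.2.2.2) = 0)).card : ℝ) + (D1.card : ℝ) := by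
    rw [hD1def, ← hsplit, Nat.cast_add]
  rw [htotal]
  have hTnn : (0 : ℝ) ≤ (U.card : ℝ) ^ 2 * (Tset.card : ℝ) :=
    mul_nonneg (by positivity) (Nat.cast_nonneg _)
  linarith [hD1le, hZr, hTnn]
end
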